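/- arXiv:1310.6100 — 3 statements merged into one kernel-verified Lean document; each statement's English description precedes it below -/
import Mathlib

section
/- Let k ∈ ℕ, let Λ be a k-graph, and let ∼ be an equivalence relation on the morphisms of Λ such that: (1) if μ ∼ ν then d(μ) = d(ν); (2) if α ∼ α′ and β ∼ β′ with s(α) = r(β) and s(α′) = r(β′), then αβ ∼ α′β′; (3) if αβ ∼ α′β′ and d(α) = d(α′), then α ∼ α′ and β ∼ β′; (4) if s(α) ∼ r(β), then there exist α′, β′ with α′ ∼ α, β′ ∼ β and s(α′) = r(β′). Then the structure maps descend to the quotient Λ/∼: the formulas d([μ]) = d(μ), r([μ]) = [r(μ)], s([μ]) = [s(μ)] are well defined, and whenever [s(λ)] = [r(μ)] the class [αβ] is independent of the choice of α ∈ [λ], β ∈ [μ] with s(α) = r(β), so [λ][μ] := [αβ] is a well-defined associative composition; with these structure maps Λ/∼ is itself a k-graph (in particular it satisfies the unique factorisation property). -/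
/-- A `k`-graph structure on a type `M` of morphisms: a countable small category whose
objects are identified with the identity morphisms (`r μ`, `s μ` are the identity
morphisms at the codomain/domain of `μ`), equipped with a degree functor
`d : M → ℕ^k` satisfying the unique factorisation property. -/
structure KGraphOn (k : ℕ) (M : Type) where
  countable : Countable M
  d : M → Fin k → ℕ
  r : M → M
  s : M → M
  comp : (μ ν : M) → s μ = r ν → M
  d_r : ∀ μ, d (r μ) = 0
  d_s : ∀ μ, d (s μ) = 0
  s_r : ∀ μ, s (r μ) = r μ
  r_r : ∀ μ, r (r μ) = r μ
  r_s : ∀ μ, r (s μ) = s μ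
  s_s : ∀ μ, s (s μ) = s μ
  r_comp : ∀ μ ν h, r (comp μ ν h) = r μ
  s_comp : ∀ μ ν h, s (comp μ ν h) = s ν
  d_comp : ∀ μ ν h, d (comp μ ν h) = d μ + d ν
  id_comp : ∀ μ, comp (r μ) μ (s_r μ) = μ
  comp_id : ∀ μ, comp μ (s μ) ((r_s μ).symm) = μ
  assoc : ∀ μ ν ρ (h₁ : s μ = r ν) (h₂ : s ν = r ρ),
    comp (comp μ ν h₁) ρ ((s_comp μ ν h₁).trans h₂)
      = comp μ (comp ν ρ h₂) (h₁.trans (r_comp ν ρ h₂).symm)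
  factor : ∀ (m n : Fin k → ℕ) (lam : M), d lam = m + n →
    ∃! p : M × M, ∃ h : s p.1 = r p.2, d p.1 = m ∧ d p.2 = n ∧ comp p.1 p.2 h = lam

open Classical

namespace KGraphOn

variable {k : ℕ} {M : Type}

/-- The first/second factor of `lam` in its factorisation with first factor of degree `m`. -/
noncomputable def split (S : KGraphOn k M) (lam : M) (m : Fin k → ℕ) : M × M :=
  if h : ∃ p : M × M, ∃ hc : S.s p.1 = S.r p.2, S.d p.1 = m ∧ S.comp p.1 p.2 hc = lam
  then h.choose else (lam, lam)

/-- The middle factor `lam(m, n)` of `lam = α β γ` with `d α = m`, `d β = n - m`. -/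
noncomputable def seg (S : KGraphOn k M) (lam : M) (m n : Fin k → ℕ) : M :=
  (S.split (S.split lam m).2 (n - m)).1

end KGraphOn

/-- The closed interval `[0, m] ⊆ ℝ^k`. -/
def cube (k : ℕ) (m : Fin k → ℕ) : Set (Fin k → ℝ) :=
  Set.Icc 0 (fun i => (m i : ℝ))

/-- The relation defining the topological realisation:
`(μ, s) ∼ (ν, t)` iff `μ(⌊s⌋, ⌈s⌉) = ν(⌊t⌋, ⌈t⌉)` and `s - ⌊s⌋ = t - ⌊t⌋`. -/
noncomputable def realRel {k : ℕ} {M : Type} (S : KGraphOn k M) :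
    (Σ lam : M, ↥(cube k (S.d lam))) → (Σ lam : M, ↥(cube k (S.d lam))) → Prop :=
  fun x y =>
    S.seg x.1 (fun i => ⌊x.2.1 i⌋₊) (fun i => ⌈x.2.1 i⌉₊)
      = S.seg y.1 (fun i => ⌊y.2.1 i⌋₊) (fun i => ⌈y.2.1 i⌉₊)
    ∧ (fun i => x.2.1 i - (⌊x.2.1 i⌋₊ : ℝ)) = (fun i => y.2.1 i - (⌊y.2.1 i⌋₊ : ℝ))

noncomputable def realSetoid {k : ℕ} {M : Type} (S : KGraphOn k M) :
    Setoid (Σ lam : M, ↥(cube k (S.d lam))) :=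
  ⟨realRel S, ⟨fun _ => ⟨rfl, rfl⟩, fun h => ⟨h.1.symm, h.2.symm⟩,
    fun h h' => ⟨h.1.trans h'.1, h.2.trans h'.2⟩⟩⟩

/-- The topological realisation `X_Λ` of a `k`-graph. -/
noncomputable def Realisation {k : ℕ} {M : Type} (S : KGraphOn k M) : Type :=
  Quotient (realSetoid S)

noncomputable instance {k : ℕ} {M : Type} (S : KGraphOn k M) :
    TopologicalSpace (Realisation S) :=
  instTopologicalSpaceQuotient


section QuotKGraph

variable {k : ℕ} {M : Type} (S : KGraphOn k M) (E : Setoid M)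

/-- A degree-zero morphism is an identity. -/
lemma deg_zero {α : M} (hα : S.d α = 0) : S.r α = α ∧ S.s α = α := by
  obtain ⟨p, _, hu⟩ := S.factor 0 0 α (by simpa using hα)
  have e1 : ((S.r α, α) : M × M) = p := hu _ ⟨S.s_r α, S.d_r α, hα, S.id_comp α⟩
  have e2 : ((α, S.s α) : M × M) = p := hu _ ⟨(S.r_s α).symm, hα, S.d_s α, S.comp_id α⟩
  have h := e1.trans e2.symm
  exact ⟨congrArg Prod.fst h, (congrArg Prod.snd h).symm⟩

lemma r_congr
    (h1 : ∀ μ ν, E.r μ ν → S.d μ = S.d ν)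
    (h2 : ∀ α α' β β' (h : S.s α = S.r β) (h' : S.s α' = S.r β'),
      E.r α α' → E.r β β' → E.r (S.comp α β h) (S.comp α' β' h'))
    (h3 : ∀ α α' β β' (h : S.s α = S.r β) (h' : S.s α' = S.r β'),
      S.d α = S.d α' → E.r (S.comp α β h) (S.comp α' β' h') → E.r α α' ∧ E.r β β')
    (h4 : ∀ α β, E.r (S.s α) (S.r β) →
      ∃ α' β', E.r α' α ∧ E.r β' β ∧ S.s α' = S.r β')
    {μ ν : M} (h : E.r μ ν) : E.r (S.r μ) (S.r ν) := by
  have := h3 (S.r μ) (S.r ν) μ ν (S.s_r μ) (S.s_r ν)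
    (by rw [S.d_r, S.d_r])
    (by rw [S.id_comp, S.id_comp]; exact h)
  exact this.1

lemma s_congr
    (h1 : ∀ μ ν, E.r μ ν → S.d μ = S.d ν)
    (h2 : ∀ α α' β β' (h : S.s α = S.r β) (h' : S.s α' = S.r β'),
      E.r α α' → E.r β β' → E.r (S.comp α β h) (S.comp α' β' h'))
    (h3 : ∀ α α' β β' (h : S.s α = S.r β) (h' : S.s α' = S.r β'),
      S.d α = S.d α' → E.r (S.comp α β h) (S.comp α' β' h') → E.r α α' ∧ E.r β β')
    (h4 : ∀ α β, E.r (S.s α) (S.r β) →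
      ∃ α' β', E.r α' α ∧ E.r β' β ∧ S.s α' = S.r β')
    {μ ν : M} (h : E.r μ ν) : E.r (S.s μ) (S.s ν) := by
  have := h3 μ ν (S.s μ) (S.s ν) ((S.r_s μ).symm) ((S.r_s ν).symm)
    (h1 μ ν h)
    (by rw [S.comp_id, S.comp_id]; exact h)
  exact this.2

/-- Degree on the quotient. -/
def Qd
    (h1 : ∀ μ ν, E.r μ ν → S.d μ = S.d ν)
    (h2 : ∀ α α' β β' (h : S.s α = S.r β) (h' : S.s α' = S.r β'),
      E.r α α' → E.r β β' → E.r (S.comp α β h) (S.comp α' β' h'))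
    (h3 : ∀ α α' β β' (h : S.s α = S.r β) (h' : S.s α' = S.r β'),
      S.d α = S.d α' → E.r (S.comp α β h) (S.comp α' β' h') → E.r α α' ∧ E.r β β')
    (h4 : ∀ α β, E.r (S.s α) (S.r β) →
      ∃ α' β', E.r α' α ∧ E.r β' β ∧ S.s α' = S.r β')
    : Quotient E → Fin k → ℕ := Quotient.lift S.d h1

/-- Range map on the quotient. -/
def Qr
    (h1 : ∀ μ ν, E.r μ ν → S.d μ = S.d ν)
    (h2 : ∀ α α' β β' (h : S.s α = S.r β) (h' : S.s α' = S.r β'),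
      E.r α α' → E.r β β' → E.r (S.comp α β h) (S.comp α' β' h'))
    (h3 : ∀ α α' β β' (h : S.s α = S.r β) (h' : S.s α' = S.r β'),
      S.d α = S.d α' → E.r (S.comp α β h) (S.comp α' β' h') → E.r α α' ∧ E.r β β')
    (h4 : ∀ α β, E.r (S.s α) (S.r β) →
      ∃ α' β', E.r α' α ∧ E.r β' β ∧ S.s α' = S.r β')
    : Quotient E → Quotient E :=
  Quotient.lift (fun μ => Quotient.mk E (S.r μ))
    (fun a b h => Quotient.sound (r_congr S E h1 h2 h3 h4 h))

/-- Source map on the quotient. -/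
def Qs
    (h1 : ∀ μ ν, E.r μ ν → S.d μ = S.d ν)
    (h2 : ∀ α α' β β' (h : S.s α = S.r β) (h' : S.s α' = S.r β'),
      E.r α α' → E.r β β' → E.r (S.comp α β h) (S.comp α' β' h'))
    (h3 : ∀ α α' β β' (h : S.s α = S.r β) (h' : S.s α' = S.r β'),
      S.d α = S.d α' → E.r (S.comp α β h) (S.comp α' β' h') → E.r α α' ∧ E.r β β')
    (h4 : ∀ α β, E.r (S.s α) (S.r β) →
      ∃ α' β', E.r α' α ∧ E.r β' β ∧ S.s α' = S.r β')
    : Quotient E → Quotient E :=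
  Quotient.lift (fun μ => Quotient.mk E (S.s μ))
    (fun a b h => Quotient.sound (s_congr S E h1 h2 h3 h4 h))

lemma pair_exists
    (h1 : ∀ μ ν, E.r μ ν → S.d μ = S.d ν)
    (h2 : ∀ α α' β β' (h : S.s α = S.r β) (h' : S.s α' = S.r β'),
      E.r α α' → E.r β β' → E.r (S.comp α β h) (S.comp α' β' h'))
    (h3 : ∀ α α' β β' (h : S.s α = S.r β) (h' : S.s α' = S.r β'),
      S.d α = S.d α' → E.r (S.comp α β h) (S.comp α' β' h') → E.r α α' ∧ E.r β β')
    (h4 : ∀ α β, E.r (S.s α) (S.r β) →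
      ∃ α' β', E.r α' α ∧ E.r β' β ∧ S.s α' = S.r β')
    (x y : Quotient E) (h : Qs S E h1 h2 h3 h4 x = Qr S E h1 h2 h3 h4 y) :
    ∃ α β, ∃ _ : S.s α = S.r β, Quotient.mk E α = x ∧ Quotient.mk E β = y := by
  induction x using Quotient.inductionOn with | _ a =>
  induction y using Quotient.inductionOn with | _ b =>
  have hab : E.r (S.s a) (S.r b) := Quotient.exact h
  obtain ⟨a', b', ha, hb, hc⟩ := h4 a b hab
  exact ⟨a', b', hc, Quotient.sound ha, Quotient.sound hb⟩

lemma comp_exists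
    (h1 : ∀ μ ν, E.r μ ν → S.d μ = S.d ν)
    (h2 : ∀ α α' β β' (h : S.s α = S.r β) (h' : S.s α' = S.r β'),
      E.r α α' → E.r β β' → E.r (S.comp α β h) (S.comp α' β' h'))
    (h3 : ∀ α α' β β' (h : S.s α = S.r β) (h' : S.s α' = S.r β'),
      S.d α = S.d α' → E.r (S.comp α β h) (S.comp α' β' h') → E.r α α' ∧ E.r β β')
    (h4 : ∀ α β, E.r (S.s α) (S.r β) →
      ∃ α' β', E.r α' α ∧ E.r β' β ∧ S.s α' = S.r β')
    (x y : Quotient E) (h : Qs S E h1 h2 h3 h4 x = Qr S E h1 h2 h3 h4 y) :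
    ∃ z : Quotient E, ∀ α β (hc : S.s α = S.r β),
      Quotient.mk E α = x → Quotient.mk E β = y → z = Quotient.mk E (S.comp α β hc) := by
  obtain ⟨a, b, hc0, hx, hy⟩ := pair_exists S E h1 h2 h3 h4 x y h
  refine ⟨Quotient.mk E (S.comp a b hc0), fun α β hc hα hβ => ?_⟩
  exact Quotient.sound (h2 a α b β hc0 hc (Quotient.exact (hx.trans hα.symm))
    (Quotient.exact (hy.trans hβ.symm)))

/-- Composition on the quotient. -/
noncomputable def Qcomp
    (h1 : ∀ μ ν, E.r μ ν → S.d μ = S.d ν)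
    (h2 : ∀ α α' β β' (h : S.s α = S.r β) (h' : S.s α' = S.r β'),
      E.r α α' → E.r β β' → E.r (S.comp α β h) (S.comp α' β' h'))
    (h3 : ∀ α α' β β' (h : S.s α = S.r β) (h' : S.s α' = S.r β'),
      S.d α = S.d α' → E.r (S.comp α β h) (S.comp α' β' h') → E.r α α' ∧ E.r β β')
    (h4 : ∀ α β, E.r (S.s α) (S.r β) →
      ∃ α' β', E.r α' α ∧ E.r β' β ∧ S.s α' = S.r β')
    (x y : Quotient E) (h : Qs S E h1 h2 h3 h4 x = Qr S E h1 h2 h3 h4 y) :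
    Quotient E :=
  (comp_exists S E h1 h2 h3 h4 x y h).choose

lemma Qcomp_eq
    (h1 : ∀ μ ν, E.r μ ν → S.d μ = S.d ν)
    (h2 : ∀ α α' β β' (h : S.s α = S.r β) (h' : S.s α' = S.r β'),
      E.r α α' → E.r β β' → E.r (S.comp α β h) (S.comp α' β' h'))
    (h3 : ∀ α α' β β' (h : S.s α = S.r β) (h' : S.s α' = S.r β'),
      S.d α = S.d α' → E.r (S.comp α β h) (S.comp α' β' h') → E.r α α' ∧ E.r β β')
    (h4 : ∀ α β, E.r (S.s α) (S.r β) →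
      ∃ α' β', E.r α' α ∧ E.r β' β ∧ S.s α' = S.r β')
    (x y : Quotient E) (h : Qs S E h1 h2 h3 h4 x = Qr S E h1 h2 h3 h4 y)
    (α β : M) (hc : S.s α = S.r β) (hα : Quotient.mk E α = x)
    (hβ : Quotient.mk E β = y) :
    Qcomp S E h1 h2 h3 h4 x y h = Quotient.mk E (S.comp α β hc) :=
  (comp_exists S E h1 h2 h3 h4 x y h).choose_spec α β hc hα hβ

/-- The quotient `k`-graph. -/
noncomputable def Qgraph
    (h1 : ∀ μ ν, E.r μ ν → S.d μ = S.d ν)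
    (h2 : ∀ α α' β β' (h : S.s α = S.r β) (h' : S.s α' = S.r β'),
      E.r α α' → E.r β β' → E.r (S.comp α β h) (S.comp α' β' h'))
    (h3 : ∀ α α' β β' (h : S.s α = S.r β) (h' : S.s α' = S.r β'),
      S.d α = S.d α' → E.r (S.comp α β h) (S.comp α' β' h') → E.r α α' ∧ E.r β β')
    (h4 : ∀ α β, E.r (S.s α) (S.r β) →
      ∃ α' β', E.r α' α ∧ E.r β' β ∧ S.s α' = S.r β')
    : KGraphOn k (Quotient E) where
  countable := by have := S.countable; exact Quotient.countable
  d := Qd S E h1 h2 h3 h4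
  r := Qr S E h1 h2 h3 h4
  s := Qs S E h1 h2 h3 h4
  comp := Qcomp S E h1 h2 h3 h4
  d_r := by
    intro x; induction x using Quotient.inductionOn with | _ a =>
    exact S.d_r a
  d_s := by
    intro x; induction x using Quotient.inductionOn with | _ a =>
    exact S.d_s a
  s_r := by
    intro x; induction x using Quotient.inductionOn with | _ a =>
    exact congrArg (Quotient.mk E) (S.s_r a)
  r_r := by
    intro x; induction x using Quotient.inductionOn with | _ a =>
    exact congrArg (Quotient.mk E) (S.r_r a)
  r_s := by
    intro x; induction x using Quotient.inductionOn with | _ a =>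
    exact congrArg (Quotient.mk E) (S.r_s a)
  s_s := by
    intro x; induction x using Quotient.inductionOn with | _ a =>
    exact congrArg (Quotient.mk E) (S.s_s a)
  r_comp := by
    intro x y h
    obtain ⟨α, β, hc, hα, hβ⟩ := pair_exists S E h1 h2 h3 h4 x y h
    rw [Qcomp_eq S E h1 h2 h3 h4 x y h α β hc hα hβ, ← hα]
    exact congrArg (Quotient.mk E) (S.r_comp α β hc)
  s_comp := by
    intro x y h
    obtain ⟨α, β, hc, hα, hβ⟩ := pair_exists S E h1 h2 h3 h4 x y h
    rw [Qcomp_eq S E h1 h2 h3 h4 x y h α β hc hα hβ, ← hβ]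
    exact congrArg (Quotient.mk E) (S.s_comp α β hc)
  d_comp := by
    intro x y h
    obtain ⟨α, β, hc, hα, hβ⟩ := pair_exists S E h1 h2 h3 h4 x y h
    rw [Qcomp_eq S E h1 h2 h3 h4 x y h α β hc hα hβ, ← hα, ← hβ]
    exact S.d_comp α β hc
  id_comp := by
    intro x
    induction x using Quotient.inductionOn with | _ b =>
    have hcond : Qs S E h1 h2 h3 h4 (Qr S E h1 h2 h3 h4 (Quotient.mk E b)) = Qr S E h1 h2 h3 h4 (Quotient.mk E b) :=
      congrArg (Quotient.mk E) (S.s_r b)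
    obtain ⟨α, β, hc, hα, hβ⟩ := pair_exists S E h1 h2 h3 h4 _ _ hcond
    rw [Qcomp_eq S E h1 h2 h3 h4 _ _ hcond α β hc hα hβ]
    -- α ∼ r b, so α has degree 0, hence α = s α = r β
    have hα0 : S.d α = 0 := by
      have : E.r α (S.r b) := Quotient.exact hα
      rw [h1 _ _ this, S.d_r]
    have hαr : α = S.r β := ((deg_zero S hα0).2).symm.trans hc
    subst hαr
    rw [S.id_comp β]; exact hβ
  comp_id := by
    intro x
    induction x using Quotient.inductionOn with | _ b =>
    have hcond : Qs S E h1 h2 h3 h4 (Quotient.mk E b) = Qr S E h1 h2 h3 h4 (Qs S E h1 h2 h3 h4 (Quotient.mk E b)) :=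
      (congrArg (Quotient.mk E) (S.r_s b)).symm
    obtain ⟨α, β, hc, hα, hβ⟩ := pair_exists S E h1 h2 h3 h4 _ _ hcond
    rw [Qcomp_eq S E h1 h2 h3 h4 _ _ hcond α β hc hα hβ]
    have hβ0 : S.d β = 0 := by
      have : E.r β (S.s b) := Quotient.exact hβ
      rw [h1 _ _ this, S.d_s]
    have hβr : β = S.s α := by
      have := (deg_zero S hβ0).1
      exact this.symm.trans hc.symm
    subst hβr
    rw [S.comp_id α]; exact hα
  assoc := by
    intro x y z H1 H2
    obtain ⟨a, b, hab, ha, hb⟩ := pair_exists S E h1 h2 h3 h4 x y H1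
    have Hpc : Qs S E h1 h2 h3 h4 (Qcomp S E h1 h2 h3 h4 x y H1) = Qr S E h1 h2 h3 h4 z := by
      rw [Qcomp_eq S E h1 h2 h3 h4 x y H1 a b hab ha hb]
      have : Qs S E h1 h2 h3 h4 (Quotient.mk E (S.comp a b hab)) = Qs S E h1 h2 h3 h4 (Quotient.mk E b) :=
        congrArg (Quotient.mk E) (S.s_comp a b hab)
      rw [this, hb]; exact H2
    obtain ⟨p, c, hpc, hp, hcz⟩ := pair_exists S E h1 h2 h3 h4 _ _ Hpc
    -- factor p as a' b' with d a' = d a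
    have hdp : S.d p = S.d a + S.d b := by
      have : E.r p (S.comp a b hab) :=
        Quotient.exact (hp.trans (Qcomp_eq S E h1 h2 h3 h4 x y H1 a b hab ha hb))
      rw [h1 _ _ this, S.d_comp]
    obtain ⟨⟨a', b'⟩, ⟨hcab', hda', hdb', hcomp'⟩, _⟩ := S.factor (S.d a) (S.d b) p hdp
    have hrel : E.r (S.comp a' b' hcab') (S.comp a b hab) := by
      rw [hcomp']
      exact Quotient.exact (hp.trans (Qcomp_eq S E h1 h2 h3 h4 x y H1 a b hab ha hb))
    obtain ⟨ha', hb'⟩ := h3 a' a b' b hcab' hab hda' hrel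
    -- composable triple a', b', c
    have hsb'c : S.s b' = S.r c := by
      have : S.s (S.comp a' b' hcab') = S.r c := by rw [hcomp']; exact hpc
      rwa [S.s_comp] at this
    have ha'x : Quotient.mk E a' = x := (Quotient.sound ha').trans ha
    have hb'y : Quotient.mk E b' = y := (Quotient.sound hb').trans hb
    -- LHS
    have hbc : Qs S E h1 h2 h3 h4 y = Qr S E h1 h2 h3 h4 z := H2
    have hQbc : Qcomp S E h1 h2 h3 h4 y z H2 = Quotient.mk E (S.comp b' c hsb'c) :=
      Qcomp_eq S E h1 h2 h3 h4 y z H2 b' c hsb'c hb'y hcz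
    rw [Qcomp_eq S E h1 h2 h3 h4 _ _ _ (S.comp a' b' hcab') c
        ((S.s_comp a' b' hcab').trans hsb'c)
        ((Qcomp_eq S E h1 h2 h3 h4 x y H1 a' b' hcab' ha'x hb'y).symm) hcz,
      Qcomp_eq S E h1 h2 h3 h4 _ _ _ a' (S.comp b' c hsb'c)
        (hcab'.trans (S.r_comp b' c hsb'c).symm) ha'x hQbc.symm]
    exact congrArg (Quotient.mk E) (S.assoc a' b' c hcab' hsb'c)
  factor := by
    intro m n x hx
    induction x using Quotient.inductionOn with | _ lam =>
    obtain ⟨⟨p₁, p₂⟩, ⟨hcp, hd1, hd2, hcomp⟩, hu⟩ := S.factor m n lam hx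
    have hcondp : Qs S E h1 h2 h3 h4 (Quotient.mk E p₁) = Qr S E h1 h2 h3 h4 (Quotient.mk E p₂) :=
      congrArg (Quotient.mk E) hcp
    refine ⟨(Quotient.mk E p₁, Quotient.mk E p₂), ⟨hcondp, hd1, hd2, ?_⟩, ?_⟩
    · rw [Qcomp_eq S E h1 h2 h3 h4 _ _ hcondp p₁ p₂ hcp rfl rfl]
      exact congrArg (Quotient.mk E) hcomp
    · rintro ⟨q₁, q₂⟩ ⟨hq, hdq1, hdq2, hqcomp⟩
      obtain ⟨α, β, hcαβ, hα, hβ⟩ := pair_exists S E h1 h2 h3 h4 q₁ q₂ hq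
      rw [Qcomp_eq S E h1 h2 h3 h4 q₁ q₂ hq α β hcαβ hα hβ] at hqcomp
      have hrel : E.r (S.comp α β hcαβ) (S.comp p₁ p₂ hcp) := by
        rw [hcomp]; exact Quotient.exact hqcomp
      have hdα : S.d α = S.d p₁ := by
        have : S.d α = m := by
          have := hα; subst this
          exact hdq1
        rw [this, hd1]
      obtain ⟨hαp, hβp⟩ := h3 α p₁ β p₂ hcαβ hcp hdα hrel
      exact Prod.ext (hα.symm.trans (Quotient.sound hαp))
        (hβ.symm.trans (Quotient.sound hβp))

end QuotKGraph

/-- an equivalence relation on a `k`-graph satisfying conditions (1)–(4)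
descends the structure maps to the quotient, which is again a `k`-graph. -/
theorem quotient_kGraph (k : ℕ) (M : Type) (S : KGraphOn k M) (E : Setoid M)
    (h1 : ∀ μ ν, E.r μ ν → S.d μ = S.d ν)
    (h2 : ∀ α α' β β' (h : S.s α = S.r β) (h' : S.s α' = S.r β'),
      E.r α α' → E.r β β' → E.r (S.comp α β h) (S.comp α' β' h'))
    (h3 : ∀ α α' β β' (h : S.s α = S.r β) (h' : S.s α' = S.r β'),
      S.d α = S.d α' → E.r (S.comp α β h) (S.comp α' β' h') → E.r α α' ∧ E.r β β')
    (h4 : ∀ α β, E.r (S.s α) (S.r β) →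
      ∃ α' β', E.r α' α ∧ E.r β' β ∧ S.s α' = S.r β') :
    ∃ S' : KGraphOn k (Quotient E),
      (∀ μ, S'.d (Quotient.mk E μ) = S.d μ) ∧
      (∀ μ, S'.r (Quotient.mk E μ) = Quotient.mk E (S.r μ)) ∧
      (∀ μ, S'.s (Quotient.mk E μ) = Quotient.mk E (S.s μ)) ∧
      (∀ α β (h : S.s α = S.r β)
          (h' : S'.s (Quotient.mk E α) = S'.r (Quotient.mk E β)),
        S'.comp (Quotient.mk E α) (Quotient.mk E β) h'
          = Quotient.mk E (S.comp α β h)) := by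
  refine ⟨Qgraph S E h1 h2 h3 h4, fun μ => rfl, fun μ => rfl, fun μ => rfl, ?_⟩
  intro α β h h'
  exact Qcomp_eq S E h1 h2 h3 h4 (Quotient.mk E α) (Quotient.mk E β) h' α β h rfl rfl
end

section
/- Let k ≥ 1, let Λ be a k-graph, and let ∼ be an equivalence relation on Λ satisfying conditions (1)–(4) of the quotient construction (so that Λ/∼ is a k-graph). Then there is a well-defined equivalence relation ≈ on the topological realisation X_Λ such that [μ,s] ≈ [ν,t] if and only if μ(⌊s⌋,⌈s⌉) ∼ ν(⌊t⌋,⌈t⌉) and s − ⌊s⌋ = t − ⌊t⌋. Writing ⟦λ,t⟧ for the class of [λ,t] under ≈ and [λ]_∼ for the class of λ under ∼, there is a homeomorphism X_Λ/≈ ≅ X_{Λ/∼} satisfying ⟦λ,t⟧ ↦ [[λ]_∼, t] for all λ ∈ Λ and t ∈ [0, d(λ)]. -/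
open Classical

namespace KGraphOn

variable {k : ℕ} {M : Type}

lemma d_snd_of_comp (S : KGraphOn k M) {q : M × M} {lam : M} {m : Fin k → ℕ}
    (hc : S.s q.1 = S.r q.2) (h1 : S.d q.1 = m) (h2 : S.comp q.1 q.2 hc = lam) :
    S.d q.2 = S.d lam - m := by
  have h := S.d_comp q.1 q.2 hc
  rw [h2, h1] at h
  funext i
  have := congrFun h i
  simp only [Pi.add_apply, Pi.sub_apply] at this ⊢
  omega

lemma split_spec (S : KGraphOn k M) (lam : M) (m : Fin k → ℕ) (hm : m ≤ S.d lam) :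
    ∃ hc : S.s (S.split lam m).1 = S.r (S.split lam m).2,
      S.d (S.split lam m).1 = m ∧ S.d (S.split lam m).2 = S.d lam - m ∧
      S.comp (S.split lam m).1 (S.split lam m).2 hc = lam := by
  have hfac : S.d lam = m + (S.d lam - m) := by
    funext i
    have hle := Pi.le_def.mp hm i
    simp only [Pi.add_apply, Pi.sub_apply]
    omega
  obtain ⟨p, ⟨hcp, hd1, hd2, hcomp⟩, -⟩ := S.factor m (S.d lam - m) lam hfac
  have hex : ∃ p : M × M, ∃ hc : S.s p.1 = S.r p.2, S.d p.1 = m ∧ S.comp p.1 p.2 hc = lam :=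
    ⟨p, hcp, hd1, hcomp⟩
  have hsp : S.split lam m = hex.choose := dif_pos hex
  obtain ⟨hc', hd1', hcomp'⟩ := hex.choose_spec
  rw [hsp]
  exact ⟨hc', hd1', S.d_snd_of_comp hc' hd1' hcomp', hcomp'⟩

lemma split_eq (S : KGraphOn k M) (lam : M) (m : Fin k → ℕ) (hm : m ≤ S.d lam)
    (q : M × M) (hc : S.s q.1 = S.r q.2) (hq1 : S.d q.1 = m)
    (hq2 : S.comp q.1 q.2 hc = lam) : S.split lam m = q := by
  have hfac : S.d lam = m + (S.d lam - m) := by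
    funext i
    have hle := Pi.le_def.mp hm i
    simp only [Pi.add_apply, Pi.sub_apply]
    omega
  obtain ⟨p, -, huniq⟩ := S.factor m (S.d lam - m) lam hfac
  obtain ⟨hc', hd1', hd2', hcomp'⟩ := S.split_spec lam m hm
  exact (huniq (S.split lam m) ⟨hc', hd1', hd2', hcomp'⟩).trans
    (huniq q ⟨hc, hq1, S.d_snd_of_comp hc hq1 hq2, hq2⟩).symm

lemma seg_quot (S : KGraphOn k M) (E : Setoid M) (S' : KGraphOn k (Quotient E))
    (hd' : ∀ μ, S'.d (Quotient.mk E μ) = S.d μ)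
    (hr' : ∀ μ, S'.r (Quotient.mk E μ) = Quotient.mk E (S.r μ))
    (hs' : ∀ μ, S'.s (Quotient.mk E μ) = Quotient.mk E (S.s μ))
    (hc' : ∀ α β (h : S.s α = S.r β)
        (h' : S'.s (Quotient.mk E α) = S'.r (Quotient.mk E β)),
      S'.comp (Quotient.mk E α) (Quotient.mk E β) h' = Quotient.mk E (S.comp α β h))
    (lam : M) (m n : Fin k → ℕ) (hm : m ≤ n) (hn : n ≤ S.d lam) :
    S'.seg (Quotient.mk E lam) m n = Quotient.mk E (S.seg lam m n) := by
  have hm' : m ≤ S.d lam := le_trans hm hn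
  obtain ⟨hc1, hd1, hd2, hcomp1⟩ := S.split_spec lam m hm'
  have hcq1 : S'.s (Quotient.mk E (S.split lam m).1)
      = S'.r (Quotient.mk E (S.split lam m).2) := by
    rw [hs', hr', hc1]
  have hsplit1 : S'.split (Quotient.mk E lam) m
      = (Quotient.mk E (S.split lam m).1, Quotient.mk E (S.split lam m).2) := by
    apply S'.split_eq _ m _ _ hcq1
    · show S'.d (Quotient.mk E (S.split lam m).1) = m
      rw [hd']; exact hd1
    · show S'.comp (Quotient.mk E (S.split lam m).1) (Quotient.mk E (S.split lam m).2) hcq1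
        = Quotient.mk E lam
      rw [hc' _ _ hc1, hcomp1]
    · rw [hd' lam]; exact hm'
  have hn2 : n - m ≤ S.d (S.split lam m).2 := by
    rw [hd2]
    refine Pi.le_def.mpr fun i => ?_
    have ha := Pi.le_def.mp hm i
    have hb := Pi.le_def.mp hn i
    simp only [Pi.sub_apply]
    omega
  obtain ⟨hc2, he1, he2, hcomp2⟩ := S.split_spec (S.split lam m).2 (n - m) hn2
  have hcq2 : S'.s (Quotient.mk E (S.split (S.split lam m).2 (n - m)).1)
      = S'.r (Quotient.mk E (S.split (S.split lam m).2 (n - m)).2) := by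
    rw [hs', hr', hc2]
  have hsplit2 : S'.split (Quotient.mk E (S.split lam m).2) (n - m)
      = (Quotient.mk E (S.split (S.split lam m).2 (n - m)).1,
         Quotient.mk E (S.split (S.split lam m).2 (n - m)).2) := by
    apply S'.split_eq _ (n - m) _ _ hcq2
    · show S'.d (Quotient.mk E (S.split (S.split lam m).2 (n - m)).1) = n - m
      rw [hd']; exact he1
    · show S'.comp (Quotient.mk E (S.split (S.split lam m).2 (n - m)).1)
          (Quotient.mk E (S.split (S.split lam m).2 (n - m)).2) hcq2
        = Quotient.mk E (S.split lam m).2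
      rw [hc' _ _ hc2, hcomp2]
    · rw [hd']; exact hn2
  show (S'.split (S'.split (Quotient.mk E lam) m).2 (n - m)).1 = _
  rw [hsplit1]
  show (S'.split (Quotient.mk E (S.split lam m).2) (n - m)).1 = _
  rw [hsplit2]
  rfl

end KGraphOn

/-- the quotient construction on a `k`-graph is compatible with topological
realisation: `X_Λ/≈ ≅ X_{Λ/∼}`. -/
theorem realisation_of_quotient (k : ℕ) (hk : 1 ≤ k) (M : Type)
    (S : KGraphOn k M) (E : Setoid M)
    (h1 : ∀ μ ν, E.r μ ν → S.d μ = S.d ν)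
    (h2 : ∀ α α' β β' (h : S.s α = S.r β) (h' : S.s α' = S.r β'),
      E.r α α' → E.r β β' → E.r (S.comp α β h) (S.comp α' β' h'))
    (h3 : ∀ α α' β β' (h : S.s α = S.r β) (h' : S.s α' = S.r β'),
      S.d α = S.d α' → E.r (S.comp α β h) (S.comp α' β' h') → E.r α α' ∧ E.r β β')
    (h4 : ∀ α β, E.r (S.s α) (S.r β) →
      ∃ α' β', E.r α' α ∧ E.r β' β ∧ S.s α' = S.r β')
    -- the induced `k`-graph structure on the quotient `Λ/∼`
    (S' : KGraphOn k (Quotient E))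
    (hd' : ∀ μ, S'.d (Quotient.mk E μ) = S.d μ)
    (hr' : ∀ μ, S'.r (Quotient.mk E μ) = Quotient.mk E (S.r μ))
    (hs' : ∀ μ, S'.s (Quotient.mk E μ) = Quotient.mk E (S.s μ))
    (hc' : ∀ α β (h : S.s α = S.r β)
        (h' : S'.s (Quotient.mk E α) = S'.r (Quotient.mk E β)),
      S'.comp (Quotient.mk E α) (Quotient.mk E β) h' = Quotient.mk E (S.comp α β h)) :
    ∃ R : Setoid (Realisation S),
      (∀ (μ : M) (s : ↥(cube k (S.d μ))) (ν : M) (t : ↥(cube k (S.d ν))),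
        R.r (Quotient.mk (realSetoid S) ⟨μ, s⟩) (Quotient.mk (realSetoid S) ⟨ν, t⟩) ↔
          (E.r (S.seg μ (fun i => ⌊s.1 i⌋₊) (fun i => ⌈s.1 i⌉₊))
               (S.seg ν (fun i => ⌊t.1 i⌋₊) (fun i => ⌈t.1 i⌉₊)) ∧
           (fun i => s.1 i - (⌊s.1 i⌋₊ : ℝ)) = (fun i => t.1 i - (⌊t.1 i⌋₊ : ℝ)))) ∧
      ∃ e : Quotient R ≃ₜ Realisation S',
        ∀ (lam : M) (t : ↥(cube k (S.d lam)))
          (ht : t.1 ∈ cube k (S'.d (Quotient.mk E lam))),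
          e (Quotient.mk R (Quotient.mk (realSetoid S) ⟨lam, t⟩))
            = Quotient.mk (realSetoid S') ⟨Quotient.mk E lam, ⟨t.1, ht⟩⟩ := by
  classical
  -- membership transfer lemmas
  have hmemS' : ∀ (lam : M) (t : ↥(cube k (S.d lam))),
      t.1 ∈ cube k (S'.d (Quotient.mk E lam)) := by
    intro lam t; rw [hd']; exact t.2
  have hqd : ∀ q : Quotient E, S'.d q = S.d q.out := by
    intro q
    conv_lhs => rw [← Quotient.out_eq q]
    exact hd' _
  have hmemS : ∀ (q : Quotient E) (t : ↥(cube k (S'.d q))),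
      t.1 ∈ cube k (S.d (Quotient.out q)) := by
    intro q t; rw [← hqd]; exact t.2
  -- sigma extensionality for the quotient k-graph
  have sigS' : ∀ (q q' : Quotient E) (hq : q = q') (t : ↥(cube k (S'.d q)))
      (t' : ↥(cube k (S'.d q'))), t.1 = t'.1 →
      (⟨q, t⟩ : Σ q : Quotient E, ↥(cube k (S'.d q))) = ⟨q', t'⟩ := by
    rintro q _ rfl t t' hv
    rw [Subtype.ext hv]
  -- floor/ceil bounds
  have hfc1 : ∀ (lam : M) (t : ↥(cube k (S.d lam))),
      (fun i => (⌊t.1 i⌋₊ : ℕ)) ≤ (fun i => ⌈t.1 i⌉₊) :=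
    fun lam t => Pi.le_def.mpr fun i => Nat.floor_le_ceil _
  have hfc2 : ∀ (lam : M) (t : ↥(cube k (S.d lam))),
      (fun i => (⌈t.1 i⌉₊ : ℕ)) ≤ S.d lam :=
    fun lam t => Pi.le_def.mpr fun i => Nat.ceil_le.mpr (t.2.2 i)
  -- the map on representatives
  set f : (Σ lam : M, ↥(cube k (S.d lam))) → Realisation S' :=
    fun x => Quotient.mk (realSetoid S') ⟨Quotient.mk E x.1, ⟨x.2.1, hmemS' x.1 x.2⟩⟩ with hf
  -- characterisation of equality of f-values
  have key : ∀ (μ : M) (s : ↥(cube k (S.d μ))) (ν : M) (t : ↥(cube k (S.d ν))),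
      f ⟨μ, s⟩ = f ⟨ν, t⟩ ↔
        (E.r (S.seg μ (fun i => ⌊s.1 i⌋₊) (fun i => ⌈s.1 i⌉₊))
             (S.seg ν (fun i => ⌊t.1 i⌋₊) (fun i => ⌈t.1 i⌉₊)) ∧
         (fun i => s.1 i - (⌊s.1 i⌋₊ : ℝ)) = (fun i => t.1 i - (⌊t.1 i⌋₊ : ℝ))) := by
    intro μ s ν t
    constructor
    · intro h
      have hA : S'.seg (Quotient.mk E μ) (fun i => ⌊s.1 i⌋₊) (fun i => ⌈s.1 i⌉₊)
          = S'.seg (Quotient.mk E ν) (fun i => ⌊t.1 i⌋₊) (fun i => ⌈t.1 i⌉₊) :=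
        (Quotient.exact h).1
      have hB : (fun i => s.1 i - (⌊s.1 i⌋₊ : ℝ)) = (fun i => t.1 i - (⌊t.1 i⌋₊ : ℝ)) :=
        (Quotient.exact h).2
      rw [KGraphOn.seg_quot S E S' hd' hr' hs' hc' μ _ _ (hfc1 μ s) (hfc2 μ s),
          KGraphOn.seg_quot S E S' hd' hr' hs' hc' ν _ _ (hfc1 ν t) (hfc2 ν t)] at hA
      exact ⟨Quotient.exact hA, hB⟩
    · rintro ⟨hA, hB⟩
      refine Quotient.sound ⟨?_, hB⟩
      show S'.seg (Quotient.mk E μ) (fun i => ⌊s.1 i⌋₊) (fun i => ⌈s.1 i⌉₊)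
          = S'.seg (Quotient.mk E ν) (fun i => ⌊t.1 i⌋₊) (fun i => ⌈t.1 i⌉₊)
      rw [KGraphOn.seg_quot S E S' hd' hr' hs' hc' μ _ _ (hfc1 μ s) (hfc2 μ s),
          KGraphOn.seg_quot S E S' hd' hr' hs' hc' ν _ _ (hfc1 ν t) (hfc2 ν t)]
      exact Quotient.sound hA
  have fresp : ∀ x y, realRel S x y → f x = f y := by
    rintro ⟨μ, s⟩ ⟨ν, t⟩ h
    have hA : S.seg μ (fun i => ⌊s.1 i⌋₊) (fun i => ⌈s.1 i⌉₊)
        = S.seg ν (fun i => ⌊t.1 i⌋₊) (fun i => ⌈t.1 i⌉₊) := h.1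
    have hB : (fun i => s.1 i - (⌊s.1 i⌋₊ : ℝ)) = (fun i => t.1 i - (⌊t.1 i⌋₊ : ℝ)) := h.2
    refine (key μ s ν t).mpr ⟨?_, hB⟩
    rw [hA]
  set F : Realisation S → Realisation S' := Quotient.lift f fresp with hF
  refine ⟨Setoid.ker F, ?_, ?_⟩
  · intro μ s ν t
    exact key μ s ν t
  · -- the homeomorphism
    set G : Quotient (Setoid.ker F) → Realisation S' :=
      Quotient.lift F (fun a b h => h) with hG
    set g : (Σ q : Quotient E, ↥(cube k (S'.d q))) → Quotient (Setoid.ker F) :=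
      fun y => Quotient.mk (Setoid.ker F)
        (Quotient.mk (realSetoid S) ⟨y.1.out, ⟨y.2.1, hmemS y.1 y.2⟩⟩) with hg
    have hfout : ∀ (q : Quotient E) (t : ↥(cube k (S'.d q))),
        f ⟨q.out, ⟨t.1, hmemS q t⟩⟩ = Quotient.mk (realSetoid S') ⟨q, t⟩ :=
      fun q t => congrArg (Quotient.mk (realSetoid S'))
        (sigS' _ _ (Quotient.out_eq q) _ _ rfl)
    have gresp : ∀ y z, realRel S' y z → g y = g z := by
      intro y z h
      apply Quotient.sound
      show f ⟨y.1.out, ⟨y.2.1, hmemS y.1 y.2⟩⟩ = f ⟨z.1.out, ⟨z.2.1, hmemS z.1 z.2⟩⟩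
      rw [hfout y.1 y.2, hfout z.1 z.2]
      exact Quotient.sound h
    set H : Realisation S' → Quotient (Setoid.ker F) := Quotient.lift g gresp with hH
    have hli : Function.LeftInverse H G := by
      intro a
      induction a using Quotient.ind with
      | _ x =>
        induction x using Quotient.ind with
        | _ x =>
          obtain ⟨lam, t⟩ := x
          exact Quotient.sound (hfout (Quotient.mk E lam) ⟨t.1, hmemS' lam t⟩)
    have hri : Function.RightInverse H G := by
      intro b
      induction b using Quotient.ind with
      | _ y =>
        obtain ⟨q, t⟩ := y
        exact hfout q t
    have fcont : Continuous f := by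
      apply continuous_sigma
      intro lam
      have c1 : Continuous fun x : ↥(cube k (S.d lam)) =>
          (⟨x.1, hmemS' lam x⟩ : ↥(cube k (S'.d (Quotient.mk E lam)))) :=
        Continuous.subtype_mk continuous_subtype_val _
      have c2 : Continuous fun x : ↥(cube k (S.d lam)) =>
          (⟨Quotient.mk E lam, ⟨x.1, hmemS' lam x⟩⟩ : Σ q : Quotient E, ↥(cube k (S'.d q))) :=
        continuous_sigmaMk.comp c1
      exact continuous_quot_mk.comp c2
    have gcont : Continuous g := by
      apply continuous_sigma
      intro q
      have c1 : Continuous fun x : ↥(cube k (S'.d q)) =>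
          (⟨x.1, hmemS q x⟩ : ↥(cube k (S.d q.out))) :=
        Continuous.subtype_mk continuous_subtype_val _
      have c2 : Continuous fun x : ↥(cube k (S'.d q)) =>
          (⟨q.out, ⟨x.1, hmemS q x⟩⟩ : Σ lam : M, ↥(cube k (S.d lam))) :=
        continuous_sigmaMk.comp c1
      exact continuous_quot_mk.comp (continuous_quot_mk.comp c2)
    have Gcont : Continuous G := Continuous.quotient_lift (Continuous.quotient_lift fcont _) _
    have Hcont : Continuous H := Continuous.quotient_lift gcont _
    refine ⟨⟨⟨G, H, hli, hri⟩, Gcont, Hcont⟩, ?_⟩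
    intro lam t ht
    exact rfl
end

section
/- For each k ≥ 1 there is a finite k-graph Γ whose topological realisation X_Γ is homeomorphic to the k-sphere S^k (the unit sphere in ℝ^{k+1}). -/
open Classical

namespace SphereGraph

variable {k : ℕ}

def rvc (p q : ℕ) : ℕ := if q ≤ 1 then p else q
def svc (p q : ℕ) : ℕ := if q ≤ 1 then q else p

def Int (P Q : Fin k → ℕ) : Prop := ∀ i, P i = Q i → P i = 1
def Val (P Q : Fin k → ℕ) : Prop := ∀ i, P i ≤ Q i ∧ Q i ≤ P i + 1 ∧ Q i ≤ 2

def Mor (k : ℕ) : Type :=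
  {x : ((Fin k → ℕ) × (Fin k → ℕ)) × Bool // Val x.1.1 x.1.2 ∧ (x.2 = true → Int x.1.1 x.1.2)}

namespace Mor
def p (μ : Mor k) : Fin k → ℕ := μ.1.1.1
def q (μ : Mor k) : Fin k → ℕ := μ.1.1.2
def b (μ : Mor k) : Bool := μ.1.2
lemma valid (μ : Mor k) (i : Fin k) : μ.p i ≤ μ.q i ∧ μ.q i ≤ μ.p i + 1 ∧ μ.q i ≤ 2 := μ.2.1 i
lemma tag_int (μ : Mor k) : μ.b = true → Int μ.p μ.q := μ.2.2
lemma ext' {μ ν : Mor k} (h1 : μ.p = ν.p) (h2 : μ.q = ν.q) (h3 : μ.b = ν.b) : μ = ν := by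
  apply Subtype.ext
  have : μ.1 = ((μ.p, μ.q), μ.b) := rfl
  rw [this, h1, h2, h3]; rfl
end Mor

noncomputable def nTag (P Q : Fin k → ℕ) (b : Bool) : Bool := if Int P Q then b else false

lemma nTag_false (P Q : Fin k → ℕ) : nTag P Q false = false := by
  unfold nTag; split_ifs <;> rfl

lemma nTag_eq_self {P Q : Fin k → ℕ} {b : Bool} (h : b = true → Int P Q) : nTag P Q b = b := by
  cases b
  · exact nTag_false P Q
  · unfold nTag; rw [if_pos (h rfl)]

lemma nTag_congr {P Q : Fin k → ℕ} {b c : Bool} (h : Int P Q → b = c) :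
    nTag P Q b = nTag P Q c := by
  unfold nTag; split_ifs with hI
  · exact h hI
  · rfl

lemma nTag_eq_true {P Q : Fin k → ℕ} {b : Bool} (h : nTag P Q b = true) : b = true ∧ Int P Q := by
  unfold nTag at h; split_ifs at h with hI
  · exact ⟨h, hI⟩

noncomputable def mk' (P Q : Fin k → ℕ) (b : Bool) (h : Val P Q) : Mor k :=
  ⟨((P, Q), nTag P Q b), h, by
    unfold nTag; split_ifs with hI
    · exact fun _ => hI
    · intro h'; cases h'⟩

@[simp] lemma mk'_p (P Q : Fin k → ℕ) (b : Bool) (h : Val P Q) : (mk' P Q b h).p = P := rfl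
@[simp] lemma mk'_q (P Q : Fin k → ℕ) (b : Bool) (h : Val P Q) : (mk' P Q b h).q = Q := rfl
@[simp] lemma mk'_b (P Q : Fin k → ℕ) (b : Bool) (h : Val P Q) : (mk' P Q b h).b = nTag P Q b := rfl

/-! vertex/range/source/composition operations -/

def rV (μ : Mor k) : Fin k → ℕ := fun i => rvc (μ.p i) (μ.q i)
def sV (μ : Mor k) : Fin k → ℕ := fun i => svc (μ.p i) (μ.q i)

lemma val_const (v : Fin k → ℕ) (hv : ∀ i, v i ≤ 2) : Val v v :=
  fun i => ⟨le_refl _, Nat.le_succ _, hv i⟩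

lemma rV_le_two (μ : Mor k) (i : Fin k) : rV μ i ≤ 2 := by
  have := μ.valid i; unfold rV rvc; split_ifs <;> omega
lemma sV_le_two (μ : Mor k) (i : Fin k) : sV μ i ≤ 2 := by
  have := μ.valid i; unfold sV svc; split_ifs <;> omega

noncomputable def rM (μ : Mor k) : Mor k := mk' (rV μ) (rV μ) μ.b (val_const _ (rV_le_two μ))
noncomputable def sM (μ : Mor k) : Mor k := mk' (sV μ) (sV μ) μ.b (val_const _ (sV_le_two μ))

lemma int_const (v : Fin k → ℕ) : Int v v ↔ ∀ i, v i = 1 := by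
  unfold Int; simp

/-- if a cell is interior then its s-vertex is the centre. -/
lemma sV_center {μ : Mor k} (h : Int μ.p μ.q) (i : Fin k) : sV μ i = 1 := by
  have h1 := μ.valid i; have h2 := h i; unfold sV svc; split_ifs <;> omega

/-- if the r-vertex coordinate is `1`, the cell is degenerate at the centre there. -/
lemma rV_one {μ : Mor k} {i : Fin k} (h : rV μ i = 1) : μ.p i = 1 ∧ μ.q i = 1 := by
  have h1 := μ.valid i; unfold rV rvc at h; split_ifs at h <;> omega

def cP (μ ν : Mor k) : Fin k → ℕ := fun i => min (μ.p i) (ν.p i)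
def cQ (μ ν : Mor k) : Fin k → ℕ := fun i => max (μ.q i) (ν.q i)

lemma val_comp {μ ν : Mor k} (hv : sV μ = rV ν) : Val (cP μ ν) (cQ μ ν) := by
  intro i
  have h1 := μ.valid i; have h2 := ν.valid i; have h3 := congrFun hv i
  unfold sV rV svc rvc at h3; unfold cP cQ
  split_ifs at h3 <;> omega

noncomputable def compM (μ ν : Mor k) (hv : sV μ = rV ν) : Mor k :=
  mk' (cP μ ν) (cQ μ ν) (μ.b || ν.b) (val_comp hv)

/-- extraction from equality of morphisms -/
lemma s_eq_r_vec {μ ν : Mor k} (h : sM μ = rM ν) : sV μ = rV ν := congrArg Mor.p h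
lemma s_eq_r_tag {μ ν : Mor k} (h : sM μ = rM ν) :
    nTag (sV μ) (sV μ) μ.b = nTag (rV ν) (rV ν) ν.b := congrArg Mor.b h

/-- `Int` of a composite implies `Int` of the second factor. -/
lemma int_comp_snd {μ ν : Mor k} (hv : sV μ = rV ν) (h : Int (cP μ ν) (cQ μ ν)) :
    Int ν.p ν.q := by
  intro i hi
  have h1 := μ.valid i; have h2 := ν.valid i; have h3 := congrFun hv i; have h4 := h i
  unfold sV rV svc rvc at h3; unfold cP cQ at h4
  split_ifs at h3 <;> omega

/-- `Int` of the second factor implies `Int` of the composite. -/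
lemma int_snd_comp {μ ν : Mor k} (hv : sV μ = rV ν) (h : Int ν.p ν.q) :
    Int (cP μ ν) (cQ μ ν) := by
  intro i hi
  have h1 := μ.valid i; have h2 := ν.valid i; have h3 := congrFun hv i; have h5 := h i
  unfold sV rV svc rvc at h3; simp only [cP, cQ] at hi ⊢
  split_ifs at h3 <;> omega

/-- if the first factor is interior then the second is the centre vertex, and conversely facts -/
lemma snd_center {μ ν : Mor k} (hv : sV μ = rV ν) (h : Int μ.p μ.q) (i : Fin k) :
    ν.p i = 1 ∧ ν.q i = 1 := by
  have h3 := congrFun hv i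
  rw [sV_center h] at h3
  exact rV_one h3.symm

lemma int_fst_comp {μ ν : Mor k} (hv : sV μ = rV ν) (h : Int μ.p μ.q) :
    Int (cP μ ν) (cQ μ ν) := by
  intro i hi
  have h1 := μ.valid i; have h2 := snd_center hv h i; have h4 := h i
  simp only [cP, cQ] at hi ⊢
  omega


/-! ## canonical factorisations -/

def fP (lam : Mor k) (m : Fin k → ℕ) : Fin k → ℕ := fun i => if m i = 0 then rV lam i else lam.p i
def fQ (lam : Mor k) (m : Fin k → ℕ) : Fin k → ℕ := fun i => if m i = 0 then rV lam i else lam.q i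
def sP (lam : Mor k) (m : Fin k → ℕ) : Fin k → ℕ := fun i => if m i = 0 then lam.p i else sV lam i
def sQ (lam : Mor k) (m : Fin k → ℕ) : Fin k → ℕ := fun i => if m i = 0 then lam.q i else sV lam i

lemma val_f (lam : Mor k) (m : Fin k → ℕ) : Val (fP lam m) (fQ lam m) := by
  intro i; have h1 := lam.valid i
  simp only [fP, fQ, rV, rvc]; split_ifs <;> omega

lemma val_s (lam : Mor k) (m : Fin k → ℕ) : Val (sP lam m) (sQ lam m) := by
  intro i; have h1 := lam.valid i
  simp only [sP, sQ, sV, svc]; split_ifs <;> omega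

noncomputable def FstM (lam : Mor k) (m : Fin k → ℕ) : Mor k :=
  mk' (fP lam m) (fQ lam m) lam.b (val_f lam m)
noncomputable def SndM (lam : Mor k) (m : Fin k → ℕ) : Mor k :=
  mk' (sP lam m) (sQ lam m) lam.b (val_s lam m)

lemma hvFS (lam : Mor k) (m : Fin k → ℕ) : sV (FstM lam m) = rV (SndM lam m) := by
  funext i; have h1 := lam.valid i
  simp only [FstM, SndM, sV, rV, mk'_p, mk'_q, fP, fQ, sP, sQ, svc, rvc]
  split_ifs <;> omega

lemma d_FstM (lam : Mor k) (m : Fin k → ℕ) (hm : ∀ i, m i ≤ lam.q i - lam.p i) (i : Fin k) :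
    (FstM lam m).q i - (FstM lam m).p i = m i := by
  have h1 := lam.valid i; have h2 := hm i
  simp only [FstM, mk'_p, mk'_q, fP, fQ, rV, rvc]
  split_ifs <;> omega

lemma d_SndM (lam : Mor k) (m : Fin k → ℕ) (hm : ∀ i, m i ≤ lam.q i - lam.p i) (i : Fin k) :
    (SndM lam m).q i - (SndM lam m).p i = (lam.q i - lam.p i) - m i := by
  have h1 := lam.valid i; have h2 := hm i
  simp only [SndM, mk'_p, mk'_q, sP, sQ, sV, svc]
  split_ifs <;> omega

lemma cP_FS (lam : Mor k) (m : Fin k → ℕ) : cP (FstM lam m) (SndM lam m) = lam.p := by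
  funext i; have h1 := lam.valid i
  simp only [cP, FstM, SndM, mk'_p, fP, sP, rV, rvc, sV, svc]
  split_ifs <;> omega

lemma cQ_FS (lam : Mor k) (m : Fin k → ℕ) : cQ (FstM lam m) (SndM lam m) = lam.q := by
  funext i; have h1 := lam.valid i
  simp only [cQ, FstM, SndM, mk'_q, fQ, sQ, rV, rvc, sV, svc]
  split_ifs <;> omega

/-- interiority of the canonical second factor. -/
lemma int_SndM {lam : Mor k} (m : Fin k → ℕ) (h : Int lam.p lam.q) :
    Int (sP lam m) (sQ lam m) := by
  intro i hi
  have h1 := lam.valid i; have h2 := h i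
  simp only [sP, sQ, sV, svc] at hi ⊢
  split_ifs at hi ⊢ <;> omega

/-- the canonical pair is composable as morphisms (including tags). -/
lemma sM_FstM (lam : Mor k) (m : Fin k → ℕ) : sM (FstM lam m) = rM (SndM lam m) := by
  apply Mor.ext'
  · exact hvFS lam m
  · exact hvFS lam m
  · show nTag _ _ (FstM lam m).b = nTag _ _ (SndM lam m).b
    rw [show sV (FstM lam m) = rV (SndM lam m) from hvFS lam m]
    apply nTag_congr
    intro hI
    rw [int_const] at hI
    have hf : Int (fP lam m) (fQ lam m) := by
      intro i hi
      have h1 := lam.valid i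
      have h2 := hI i
      simp only [SndM, rV, mk'_p, mk'_q, rvc, sP, sQ, sV, svc] at h2
      simp only [fP, fQ, rV, rvc] at hi ⊢
      split_ifs at hi h2 ⊢ <;> omega
    have hs : Int (sP lam m) (sQ lam m) := by
      intro i hi
      have h1 := lam.valid i
      have h2 := hI i
      simp only [SndM, rV, mk'_p, mk'_q, rvc, sP, sQ, sV, svc] at h2
      simp only [sP, sQ, sV, svc] at hi ⊢
      split_ifs at hi h2 ⊢ <;> omega
    show nTag _ _ lam.b = nTag _ _ lam.b
    rw [nTag_eq_self (fun _ => hf), nTag_eq_self (fun _ => hs)]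

lemma compM_FS (lam : Mor k) (m : Fin k → ℕ) :
    compM (FstM lam m) (SndM lam m) (hvFS lam m) = lam := by
  apply Mor.ext'
  · exact cP_FS lam m
  · exact cQ_FS lam m
  · show nTag _ _ ((FstM lam m).b || (SndM lam m).b) = lam.b
    rw [show cP (FstM lam m) (SndM lam m) = lam.p from cP_FS lam m,
        show cQ (FstM lam m) (SndM lam m) = lam.q from cQ_FS lam m]
    show nTag _ _ (nTag _ _ lam.b || nTag _ _ lam.b) = lam.b
    cases hb : lam.b
    · rw [nTag_false, nTag_false, Bool.or_self, nTag_false]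
    · have hI := lam.tag_int hb
      rw [nTag_eq_self (fun _ => int_SndM m hI), Bool.or_true,
          nTag_eq_self (fun _ => hI)]

lemma nTag_idem (P Q : Fin k → ℕ) (b : Bool) : nTag P Q (nTag P Q b) = nTag P Q b := by
  unfold nTag; split_ifs <;> rfl

lemma int_one : Int (fun _ : Fin k => 1) (fun _ => 1) := fun _ _ => rfl

lemma rV_compM {μ ν : Mor k} (hv : sV μ = rV ν) : rV (compM μ ν hv) = rV μ := by
  funext i
  have h1 := μ.valid i; have h2 := ν.valid i; have h3 := congrFun hv i
  show rvc (cP μ ν i) (cQ μ ν i) = rV μ i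
  simp only [rV, compM, mk'_p, mk'_q, cP, cQ, rvc, sV, svc] at h3 ⊢
  by_cases hc1 : μ.q i ≤ 1 <;> by_cases hc2 : ν.q i ≤ 1 <;> by_cases hc3 : max (μ.q i) (ν.q i) ≤ 1 <;>
    simp only [hc1, hc2, hc3, if_true, if_false] at h3 ⊢ <;> omega

lemma sV_compM {μ ν : Mor k} (hv : sV μ = rV ν) : sV (compM μ ν hv) = sV ν := by
  funext i
  have h1 := μ.valid i; have h2 := ν.valid i; have h3 := congrFun hv i
  show svc (cP μ ν i) (cQ μ ν i) = sV ν i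
  simp only [sV, compM, mk'_p, mk'_q, cP, cQ, rvc, svc, rV] at h3 ⊢
  by_cases hc1 : μ.q i ≤ 1 <;> by_cases hc2 : ν.q i ≤ 1 <;> by_cases hc3 : max (μ.q i) (ν.q i) ≤ 1 <;>
    simp only [hc1, hc2, hc3, if_true, if_false] at h3 ⊢ <;> omega

/-- tags equality both centre. -/
lemma tag_center {μ ν : Mor k} (h : sM μ = rM ν) (hIμ : Int μ.p μ.q) : μ.b = ν.b := by
  have hv := s_eq_r_vec h
  have hsv1 : sV μ = fun _ => 1 := funext (sV_center hIμ)
  have hrv2 : rV ν = fun _ => 1 := by rw [← hv]; exact hsv1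
  have ht := s_eq_r_tag h
  rw [hsv1, hrv2, nTag_eq_self (fun _ => int_one), nTag_eq_self (fun _ => int_one)] at ht
  exact ht

/-- uniqueness of factorisations. -/
lemma L2 {lam μ ν : Mor k} {m : Fin k → ℕ} (h : sM μ = rM ν)
    (hd : ∀ i, μ.q i - μ.p i = m i)
    (hc : compM μ ν (s_eq_r_vec h) = lam) :
    μ = FstM lam m ∧ ν = SndM lam m := by
  have hv := s_eq_r_vec h
  have hcp : cP μ ν = lam.p := congrArg Mor.p hc
  have hcq : cQ μ ν = lam.q := congrArg Mor.q hc
  have hbc : nTag (cP μ ν) (cQ μ ν) (μ.b || ν.b) = lam.b := congrArg Mor.b hc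
  have key : ∀ i, μ.p i = fP lam m i ∧ μ.q i = fQ lam m i ∧
      ν.p i = sP lam m i ∧ ν.q i = sQ lam m i := by
    intro i
    have h1 := μ.valid i; have h2 := ν.valid i
    have h3 := congrFun hv i
    have h4 := congrFun hcp i; have h5 := congrFun hcq i
    have h6 := hd i
    simp only [sV, rV, svc, rvc] at h3
    simp only [cP] at h4; simp only [cQ] at h5
    simp only [fP, fQ, sP, sQ, rV, sV, rvc, svc]
    rw [← h4, ← h5]
    split_ifs at h3 ⊢ <;> omega
  have hP : μ.p = fP lam m := funext fun i => (key i).1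
  have hQ : μ.q = fQ lam m := funext fun i => (key i).2.1
  have hP2 : ν.p = sP lam m := funext fun i => (key i).2.2.1
  have hQ2 : ν.q = sQ lam m := funext fun i => (key i).2.2.2
  have hb1 : μ.b = nTag μ.p μ.q lam.b := by
    cases hbb : μ.b with
    | true =>
        have hIμ := μ.tag_int hbb
        have hIc := int_fst_comp hv hIμ
        have hlam : lam.b = true := by
          rw [← hbc, nTag_eq_self (fun _ => hIc), hbb, Bool.true_or]
        rw [hlam, nTag_eq_self (fun _ => hIμ)]
    | false =>
        by_cases hIμ : Int μ.p μ.q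
        · have hb2' : ν.b = false := by rw [← tag_center h hIμ, hbb]
          have hlam : lam.b = false := by rw [← hbc, hbb, hb2']; exact nTag_false _ _
          rw [hlam, nTag_false]
        · rw [show nTag μ.p μ.q lam.b = false from by unfold nTag; rw [if_neg hIμ]]
  have hb2 : ν.b = nTag ν.p ν.q lam.b := by
    cases hbb : ν.b with
    | true =>
        have hIν := ν.tag_int hbb
        have hIc := int_snd_comp hv hIν
        have hlam : lam.b = (μ.b || ν.b) := by rw [← hbc, nTag_eq_self (fun _ => hIc)]
        rw [hlam, hbb, Bool.or_true, nTag_eq_self (fun _ => hIν)]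
    | false =>
        by_cases hIν : Int ν.p ν.q
        · have hlam : lam.b = false := by
            by_contra hl
            have hl' : lam.b = true := by
              cases hll : lam.b
              · exact absurd hll hl
              · rfl
            have h1 : nTag (cP μ ν) (cQ μ ν) (μ.b || ν.b) = true := by rw [hbc, hl']
            obtain ⟨hor, _⟩ := nTag_eq_true h1
            have hbμ : μ.b = true := by
              cases hμ : μ.b
              · rw [hμ, hbb] at hor; cases hor
              · rfl
            have := tag_center h (μ.tag_int hbμ)
            rw [hbμ, hbb] at this; cases this
          rw [hlam, nTag_false]
        · rw [show nTag ν.p ν.q lam.b = false from by unfold nTag; rw [if_neg hIν]]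
  constructor
  · refine Mor.ext' hP hQ ?_
    show μ.b = nTag (fP lam m) (fQ lam m) lam.b
    rw [← hP, ← hQ]; exact hb1
  · refine Mor.ext' hP2 hQ2 ?_
    show ν.b = nTag (sP lam m) (sQ lam m) lam.b
    rw [← hP2, ← hQ2]; exact hb2

instance : Finite (Mor k) := by
  apply Finite.of_injective (β := ((Fin k → Fin 3) × (Fin k → Fin 3)) × Bool)
    (f := fun μ : Mor k =>
      (((fun i => (⟨μ.p i, by have := μ.valid i; omega⟩ : Fin 3)),
        (fun i => (⟨μ.q i, by have := μ.valid i; omega⟩ : Fin 3))), μ.b))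
  intro μ ν hEq
  apply Mor.ext'
  · funext i
    exact congrArg Fin.val (congrFun (congrArg (fun z => z.1.1) hEq) i)
  · funext i
    exact congrArg Fin.val (congrFun (congrArg (fun z => z.1.2) hEq) i)
  · exact congrArg (fun (z : ((Fin k → Fin 3) × (Fin k → Fin 3)) × Bool) => z.2) hEq

/-- The sphere `k`-graph. -/
noncomputable def S (k : ℕ) : KGraphOn k (Mor k) where
  countable := inferInstance
  d := fun μ i => μ.q i - μ.p i
  r := rM
  s := sM
  comp := fun μ ν h => compM μ ν (s_eq_r_vec h)
  d_r := by
    intro μ; funext i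
    show rV μ i - rV μ i = (0 : Fin k → ℕ) i
    simp
  d_s := by
    intro μ; funext i
    show sV μ i - sV μ i = (0 : Fin k → ℕ) i
    simp
  s_r := by
    intro μ
    have hsv : sV (rM μ) = rV μ := by
      funext i
      show svc (rV μ i) (rV μ i) = rV μ i
      unfold svc; split_ifs <;> rfl
    refine Mor.ext' hsv hsv ?_
    show nTag (sV (rM μ)) (sV (rM μ)) ((rM μ).b) = (rM μ).b
    rw [hsv]
    exact nTag_idem _ _ _
  r_r := by
    intro μ
    have hrv : rV (rM μ) = rV μ := by
      funext i
      show rvc (rV μ i) (rV μ i) = rV μ i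
      unfold rvc; split_ifs <;> rfl
    refine Mor.ext' hrv hrv ?_
    show nTag (rV (rM μ)) (rV (rM μ)) ((rM μ).b) = (rM μ).b
    rw [hrv]
    exact nTag_idem _ _ _
  r_s := by
    intro μ
    have hrv : rV (sM μ) = sV μ := by
      funext i
      show rvc (sV μ i) (sV μ i) = sV μ i
      unfold rvc; split_ifs <;> rfl
    refine Mor.ext' hrv hrv ?_
    show nTag (rV (sM μ)) (rV (sM μ)) ((sM μ).b) = (sM μ).b
    rw [hrv]
    exact nTag_idem _ _ _
  s_s := by
    intro μ
    have hsv : sV (sM μ) = sV μ := by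
      funext i
      show svc (sV μ i) (sV μ i) = sV μ i
      unfold svc; split_ifs <;> rfl
    refine Mor.ext' hsv hsv ?_
    show nTag (sV (sM μ)) (sV (sM μ)) ((sM μ).b) = (sM μ).b
    rw [hsv]
    exact nTag_idem _ _ _
  r_comp := by
    intro μ ν h
    have hv := s_eq_r_vec h
    have hrr : rV (compM μ ν (s_eq_r_vec h)) = rV μ := rV_compM _
    refine Mor.ext' hrr hrr ?_
    show nTag (rV (compM μ ν (s_eq_r_vec h))) _ ((compM μ ν (s_eq_r_vec h)).b)
        = nTag (rV μ) (rV μ) μ.b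
    rw [hrr]
    apply nTag_congr
    intro hI
    rw [int_const] at hI
    have hIμ : Int μ.p μ.q := fun i _ => (rV_one (hI i)).1
    have hIc : Int (cP μ ν) (cQ μ ν) := int_fst_comp hv hIμ
    show nTag (cP μ ν) (cQ μ ν) (μ.b || ν.b) = μ.b
    rw [nTag_eq_self (fun _ => hIc), tag_center h hIμ, Bool.or_self]
  s_comp := by
    intro μ ν h
    have hv := s_eq_r_vec h
    have hss : sV (compM μ ν (s_eq_r_vec h)) = sV ν := sV_compM _
    refine Mor.ext' hss hss ?_
    show nTag (sV (compM μ ν (s_eq_r_vec h))) _ ((compM μ ν (s_eq_r_vec h)).b)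
        = nTag (sV ν) (sV ν) ν.b
    rw [hss]
    apply nTag_congr
    intro _
    show nTag (cP μ ν) (cQ μ ν) (μ.b || ν.b) = ν.b
    cases hb2 : ν.b with
    | true =>
        rw [nTag_eq_self (fun _ => int_snd_comp hv (ν.tag_int hb2)), Bool.or_true]
    | false =>
        cases hb1 : μ.b with
        | false => rw [Bool.or_self, nTag_false]
        | true =>
            have := tag_center h (μ.tag_int hb1)
            rw [hb1, hb2] at this; cases this
  d_comp := by
    intro μ ν h; funext i
    have h1 := μ.valid i; have h2 := ν.valid i; have h3 := congrFun (s_eq_r_vec h) i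
    show cQ μ ν i - cP μ ν i = (μ.q i - μ.p i) + (ν.q i - ν.p i)
    simp only [cP, cQ, sV, rV, svc, rvc] at h3 ⊢
    split_ifs at h3 <;> omega
  id_comp := by
    intro μ
    have e1 : cP (rM μ) μ = μ.p := by
      funext i; have h1 := μ.valid i
      show min (rV μ i) (μ.p i) = μ.p i
      simp only [rV, rvc]; split_ifs <;> omega
    have e2 : cQ (rM μ) μ = μ.q := by
      funext i; have h1 := μ.valid i
      show max (rV μ i) (μ.q i) = μ.q i
      simp only [rV, rvc]; split_ifs <;> omega
    refine Mor.ext' e1 e2 ?_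
    show nTag (cP (rM μ) μ) (cQ (rM μ) μ) ((rM μ).b || μ.b) = μ.b
    rw [e1, e2]
    show nTag μ.p μ.q (nTag (rV μ) (rV μ) μ.b || μ.b) = μ.b
    cases hb : μ.b with
    | false => rw [nTag_false, Bool.or_self, nTag_false]
    | true => rw [Bool.or_true, nTag_eq_self (fun _ => μ.tag_int hb)]
  comp_id := by
    intro μ
    have e1 : cP μ (sM μ) = μ.p := by
      funext i; have h1 := μ.valid i
      show min (μ.p i) (sV μ i) = μ.p i
      simp only [sV, svc]; split_ifs <;> omega
    have e2 : cQ μ (sM μ) = μ.q := by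
      funext i; have h1 := μ.valid i
      show max (μ.q i) (sV μ i) = μ.q i
      simp only [sV, svc]; split_ifs <;> omega
    refine Mor.ext' e1 e2 ?_
    show nTag (cP μ (sM μ)) (cQ μ (sM μ)) (μ.b || (sM μ).b) = μ.b
    rw [e1, e2]
    show nTag μ.p μ.q (μ.b || nTag (sV μ) (sV μ) μ.b) = μ.b
    cases hb : μ.b with
    | false => rw [nTag_false, Bool.or_self, nTag_false]
    | true => rw [Bool.true_or, nTag_eq_self (fun _ => μ.tag_int hb)]
  assoc := by
    intro μ ν ρ h₁ h₂
    have hv1 := s_eq_r_vec h₁; have hv2 := s_eq_r_vec h₂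
    have eA : ∀ (ha : sV (compM μ ν hv1) = rV ρ) (hb : sV μ = rV (compM ν ρ hv2)),
        cP (compM μ ν hv1) ρ = cP μ (compM ν ρ hv2) :=
      fun _ _ => funext fun i => min_assoc _ _ _
    have eB : cQ (compM μ ν hv1) ρ = cQ μ (compM ν ρ hv2) :=
      funext fun i => max_assoc _ _ _
    have eAx : cP (compM μ ν hv1) ρ = cP μ (compM ν ρ hv2) :=
      funext fun i => min_assoc _ _ _
    refine Mor.ext' eAx eB ?_
    show nTag (cP (compM μ ν hv1) ρ) (cQ (compM μ ν hv1) ρ)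
        ((compM μ ν hv1).b || ρ.b)
        = nTag (cP μ (compM ν ρ hv2)) (cQ μ (compM ν ρ hv2))
        (μ.b || (compM ν ρ hv2).b)
    rw [eAx, eB]
    apply nTag_congr
    intro hI
    have hv23 : sV μ = rV (compM ν ρ hv2) := hv1.trans (rV_compM hv2).symm
    have hI23 : Int (cP ν ρ) (cQ ν ρ) := int_comp_snd hv23 hI
    show (nTag (cP μ ν) (cQ μ ν) (μ.b || ν.b) || ρ.b)
        = (μ.b || nTag (cP ν ρ) (cQ ν ρ) (ν.b || ρ.b))
    rw [nTag_eq_self (fun _ => hI23)]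
    by_cases hI12 : Int (cP μ ν) (cQ μ ν)
    · rw [nTag_eq_self (fun _ => hI12), Bool.or_assoc]
    · have hbμ : μ.b = false := by
        cases hbb : μ.b
        · rfl
        · exact absurd (int_fst_comp hv1 (μ.tag_int hbb)) hI12
      have hbν : ν.b = false := by
        cases hbb : ν.b
        · rfl
        · exact absurd (int_snd_comp hv1 (ν.tag_int hbb)) hI12
      rw [hbμ, hbν, Bool.or_self, nTag_false, Bool.false_or, Bool.false_or]
  factor := by
    intro m n lam hd
    have hm : ∀ i, m i ≤ lam.q i - lam.p i := by
      intro i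
      have h6 : lam.q i - lam.p i = m i + n i := congrFun hd i
      omega
    refine ⟨(FstM lam m, SndM lam m), ⟨sM_FstM lam m, ?_, ?_, ?_⟩, ?_⟩
    · funext i; exact d_FstM lam m hm i
    · funext i
      have h6 : lam.q i - lam.p i = m i + n i := congrFun hd i
      have h7 := d_SndM lam m hm i
      have h8 := lam.valid i
      show (SndM lam m).q i - (SndM lam m).p i = n i
      omega
    · exact compM_FS lam m
    · rintro ⟨y1, y2⟩ ⟨hcmp, hd1, hd2, hcq⟩
      have hL := L2 hcmp (fun i => congrFun hd1 i) hcq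
      obtain ⟨hL1, hL2⟩ := hL
      show (y1, y2) = (FstM lam m, SndM lam m)
      rw [show y1 = FstM lam m from hL1, show y2 = SndM lam m from hL2]


/-! ## computing `split` and `seg` -/

lemma split_eq (lam : Mor k) (m : Fin k → ℕ) (hm : ∀ i, m i ≤ lam.q i - lam.p i) :
    (S k).split lam m = (FstM lam m, SndM lam m) := by
  have hex : ∃ p : Mor k × Mor k, ∃ hc : (S k).s p.1 = (S k).r p.2,
      (S k).d p.1 = m ∧ (S k).comp p.1 p.2 hc = lam :=
    ⟨(FstM lam m, SndM lam m), sM_FstM lam m, funext (d_FstM lam m hm), compM_FS lam m⟩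
  unfold KGraphOn.split
  rw [dif_pos hex]
  obtain ⟨hc, hd1, hcomp⟩ := hex.choose_spec
  have hL := L2 hc (fun i => congrFun hd1 i) hcomp
  exact Prod.ext_iff.mpr ⟨hL.1, hL.2⟩

lemma seg_eq (lam : Mor k) (m n : Fin k → ℕ) (hmn : ∀ i, m i ≤ n i)
    (hn : ∀ i, n i ≤ lam.q i - lam.p i) :
    (S k).seg lam m n = FstM (SndM lam m) (n - m) := by
  have hm : ∀ i, m i ≤ lam.q i - lam.p i := fun i => le_trans (hmn i) (hn i)
  unfold KGraphOn.seg
  rw [split_eq lam m hm]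
  have h2 : ∀ i, (n - m) i ≤ (SndM lam m).q i - (SndM lam m).p i := by
    intro i
    have := d_SndM lam m hm i
    have h3 := hmn i; have h4 := hn i
    simp only [Pi.sub_apply]
    omega
  rw [split_eq (SndM lam m) (n - m) h2]

/-! ## the position invariant -/

noncomputable def c1 (v : ℝ) : ℕ := if v < 1 then 0 else if v < 2 then 1 else 2
noncomputable def c2 (v : ℝ) : ℕ := if v ≤ 0 then 0 else if v ≤ 1 then 1 else 2
noncomputable def fr (v : ℝ) : ℝ :=
  if v ≤ 0 then 0 else if v < 1 then v else if v ≤ 1 then 0 else if v < 2 then 2 - v else 0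

lemma c1_le_c2 {v : ℝ} (h0 : 0 ≤ v) : c1 v ≤ c2 v ∧ c2 v ≤ c1 v + 1 ∧ c2 v ≤ 2 := by
  simp only [c1, c2]; split_ifs <;> first | omega | (exfalso; linarith)

/-- key coordinatewise computation. -/
lemma coordKey (p q : ℕ) (t : ℝ) (h1 : p ≤ q) (h2 : q ≤ p + 1) (h3 : q ≤ 2)
    (ht0 : 0 ≤ t) (htd : t ≤ ((q : ℝ) - (p : ℝ))) :
    ((if (⌈t⌉₊ - ⌊t⌋₊) = 0
        then rvc (if ⌊t⌋₊ = 0 then p else svc p q) (if ⌊t⌋₊ = 0 then q else svc p q)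
        else (if ⌊t⌋₊ = 0 then p else svc p q))
      = c1 (if q ≤ 1 then (p : ℝ) + t else (q : ℝ) - t))
    ∧ ((if (⌈t⌉₊ - ⌊t⌋₊) = 0
        then rvc (if ⌊t⌋₊ = 0 then p else svc p q) (if ⌊t⌋₊ = 0 then q else svc p q)
        else (if ⌊t⌋₊ = 0 then q else svc p q))
      = c2 (if q ≤ 1 then (p : ℝ) + t else (q : ℝ) - t))
    ∧ (t - (⌊t⌋₊ : ℝ) = fr (if q ≤ 1 then (p : ℝ) + t else (q : ℝ) - t)) := by
  have hq : q = p ∨ q = p + 1 := by omega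
  rcases hq with hq | hq
  · subst hq
    have ht : t = 0 := le_antisymm (by simpa using htd) ht0
    subst ht
    simp only [Nat.floor_zero, Nat.ceil_zero, rvc, svc, c1, c2, fr]
    interval_cases q <;> norm_num
  · subst hq
    have hp1 : p ≤ 1 := by omega
    have htd1 : t ≤ 1 := by push_cast at htd; linarith
    rcases eq_or_lt_of_le ht0 with h0 | h0
    · -- t = 0
      subst h0
      simp only [Nat.floor_zero, Nat.ceil_zero, rvc, svc, c1, c2, fr]
      interval_cases p <;> norm_num
    · rcases eq_or_lt_of_le htd1 with h1' | h1'
      · -- t = 1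
        subst h1'
        simp only [Nat.floor_one, Nat.ceil_one, rvc, svc, c1, c2, fr]
        interval_cases p <;> norm_num
      · -- 0 < t < 1
        have hf : ⌊t⌋₊ = 0 := Nat.floor_eq_zero.mpr h1'
        have hc : ⌈t⌉₊ = 1 := by
          refine le_antisymm ?_ ?_
          · rw [Nat.ceil_le]; exact_mod_cast le_of_lt h1'
          · rw [Nat.one_le_iff_ne_zero]
            intro hz
            rw [Nat.ceil_eq_zero] at hz
            linarith
        rw [hf, hc]
        simp only [rvc, svc, c1, c2, fr]
        interval_cases p <;> norm_num <;> split_ifs <;> first | rfl | omega | linarith | exact ⟨rfl, rfl, rfl⟩ | exact ⟨fun h => absurd h (by linarith), rfl, rfl⟩ | skip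

/-! ## the invariant of a point of the realisation -/

noncomputable def Xz (z : Σ lam : Mor k, ↥(cube k ((S k).d lam))) : Fin k → ℝ :=
  fun i => if z.1.q i ≤ 1 then (z.1.p i : ℝ) + z.2.1 i else (z.1.q i : ℝ) - z.2.1 i

lemma t_bounds (z : Σ lam : Mor k, ↥(cube k ((S k).d lam))) (i : Fin k) :
    0 ≤ z.2.1 i ∧ z.2.1 i ≤ (z.1.q i : ℝ) - (z.1.p i : ℝ) := by
  have hm := z.2.2
  simp only [cube] at hm
  rw [Set.mem_Icc] at hm
  have h0 : (0 : Fin k → ℝ) i ≤ z.2.1 i := hm.1 i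
  have h1 : z.2.1 i ≤ (((S k).d z.1 i : ℕ) : ℝ) := hm.2 i
  have h2 := z.1.valid i
  constructor
  · simpa using h0
  · have : (((z.1.q i - z.1.p i : ℕ)) : ℝ) = (z.1.q i : ℝ) - (z.1.p i : ℝ) := by
      rw [Nat.cast_sub h2.1]
    rw [← this]
    exact h1

lemma Xz_nonneg (z : Σ lam : Mor k, ↥(cube k ((S k).d lam))) (i : Fin k) : 0 ≤ Xz z i := by
  have h1 := t_bounds z i; have h2 := z.1.valid i
  unfold Xz; split_ifs with h
  · have : (0:ℝ) ≤ (z.1.p i : ℝ) := Nat.cast_nonneg _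
    linarith [h1.1]
  · linarith [h1.2]

lemma Xz_le_two (z : Σ lam : Mor k, ↥(cube k ((S k).d lam))) (i : Fin k) : Xz z i ≤ 2 := by
  have h1 := t_bounds z i; have h2 := z.1.valid i
  have hq : (z.1.q i : ℝ) ≤ 2 := by exact_mod_cast h2.2.2
  unfold Xz; split_ifs with h
  · have : (z.1.q i : ℝ) ≤ 1 := by exact_mod_cast h
    linarith [h1.2]
  · linarith [h1.1]

noncomputable def SegM (z : Σ lam : Mor k, ↥(cube k ((S k).d lam))) : Mor k :=
  mk' (fun i => c1 (Xz z i)) (fun i => c2 (Xz z i)) z.1.b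
    (fun i => c1_le_c2 (Xz_nonneg z i))

lemma int_fP {lam : Mor k} {m' : Fin k → ℕ} (h : Int (fP lam m') (fQ lam m')) :
    Int lam.p lam.q := by
  intro i hi
  have h2 := h i
  simp only [fP, fQ, rV, rvc] at h2
  split_ifs at h2 <;> omega

def coordKey' (z : Σ lam : Mor k, ↥(cube k ((S k).d lam))) (i : Fin k) :=
  coordKey (z.1.p i) (z.1.q i) (z.2.1 i) (z.1.valid i).1 (z.1.valid i).2.1 (z.1.valid i).2.2
    (t_bounds z i).1 (t_bounds z i).2

lemma seg_floor (z : Σ lam : Mor k, ↥(cube k ((S k).d lam))) :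
    (S k).seg z.1 (fun i => ⌊z.2.1 i⌋₊) (fun i => ⌈z.2.1 i⌉₊) = SegM z := by
  have hfc : ∀ i, (fun i => ⌊z.2.1 i⌋₊) i ≤ (fun i => ⌈z.2.1 i⌉₊) i :=
    fun i => Nat.floor_le_ceil _
  have hcd : ∀ i, (fun i => ⌈z.2.1 i⌉₊) i ≤ z.1.q i - z.1.p i := by
    intro i
    rw [Nat.ceil_le]
    have h2 := z.1.valid i
    have : (((z.1.q i - z.1.p i : ℕ)) : ℝ) = (z.1.q i : ℝ) - (z.1.p i : ℝ) := by
      rw [Nat.cast_sub h2.1]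
    rw [this]
    exact (t_bounds z i).2
  rw [seg_eq z.1 _ _ hfc hcd]
  have e1 : fP (SndM z.1 (fun i => ⌊z.2.1 i⌋₊)) ((fun i => ⌈z.2.1 i⌉₊) - (fun i => ⌊z.2.1 i⌋₊))
      = fun i => c1 (Xz z i) := by
    funext i
    have key := (coordKey' z i).1
    simp only [fP, SndM, mk'_p, mk'_q, sP, sQ, rV, sV, Pi.sub_apply, Xz]
    exact key
  have e2 : fQ (SndM z.1 (fun i => ⌊z.2.1 i⌋₊)) ((fun i => ⌈z.2.1 i⌉₊) - (fun i => ⌊z.2.1 i⌋₊))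
      = fun i => c2 (Xz z i) := by
    funext i
    have key := (coordKey' z i).2.1
    simp only [fQ, SndM, mk'_p, mk'_q, sP, sQ, rV, sV, Pi.sub_apply, Xz]
    exact key
  refine Mor.ext' e1 e2 ?_
  show nTag _ _ ((SndM z.1 (fun i => ⌊z.2.1 i⌋₊)).b) = (SegM z).b
  rw [e1, e2]
  show nTag _ _ (nTag _ _ z.1.b) = nTag _ _ z.1.b
  apply nTag_congr
  intro hI
  have hI' : Int (fP (SndM z.1 (fun i => ⌊z.2.1 i⌋₊)) ((fun i => ⌈z.2.1 i⌉₊) - (fun i => ⌊z.2.1 i⌋₊)))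
      (fQ (SndM z.1 (fun i => ⌊z.2.1 i⌋₊)) ((fun i => ⌈z.2.1 i⌉₊) - (fun i => ⌊z.2.1 i⌋₊))) := by
    rw [e1, e2]; exact hI
  exact nTag_eq_self (fun _ => int_fP hI')

lemma recon {v w : ℝ} (hv0 : 0 ≤ v) (hv2 : v ≤ 2) (hw0 : 0 ≤ w) (hw2 : w ≤ 2)
    (hc1 : c1 v = c1 w) (hc2 : c2 v = c2 w) (hf : fr v = fr w) : v = w := by
  simp only [c1, c2, fr] at hc1 hc2 hf
  split_ifs at hc1 hc2 hf <;> first | linarith | omega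

lemma frac_eq (z : Σ lam : Mor k, ↥(cube k ((S k).d lam))) (i : Fin k) :
    z.2.1 i - (⌊z.2.1 i⌋₊ : ℝ) = fr (Xz z i) := by
  have key := (coordKey' z i).2.2
  simpa only [Xz] using key

lemma realRel_iff (z w : Σ lam : Mor k, ↥(cube k ((S k).d lam))) :
    realRel (S k) z w ↔ (Xz z = Xz w ∧
      nTag (fun i => c1 (Xz z i)) (fun i => c2 (Xz z i)) z.1.b
        = nTag (fun i => c1 (Xz w i)) (fun i => c2 (Xz w i)) w.1.b) := by
  unfold realRel
  rw [seg_floor z, seg_floor w]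
  constructor
  · rintro ⟨hseg, hfrac⟩
    have hc1 : (fun i => c1 (Xz z i)) = (fun i => c1 (Xz w i)) := congrArg Mor.p hseg
    have hc2 : (fun i => c2 (Xz z i)) = (fun i => c2 (Xz w i)) := congrArg Mor.q hseg
    have hbt : nTag (fun i => c1 (Xz z i)) (fun i => c2 (Xz z i)) z.1.b
        = nTag (fun i => c1 (Xz w i)) (fun i => c2 (Xz w i)) w.1.b := congrArg Mor.b hseg
    refine ⟨funext fun i => ?_, hbt⟩
    have hfr : fr (Xz z i) = fr (Xz w i) := by
      rw [← frac_eq z i, ← frac_eq w i]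
      exact congrFun hfrac i
    exact recon (Xz_nonneg z i) (Xz_le_two z i) (Xz_nonneg w i) (Xz_le_two w i)
      (congrFun hc1 i) (congrFun hc2 i) hfr
  · rintro ⟨hX, hbt⟩
    constructor
    · refine Mor.ext' ?_ ?_ hbt
      · funext i; simp only [SegM, mk'_p]; exact congrArg c1 (congrFun hX i)
      · funext i; simp only [SegM, mk'_q]; exact congrArg c2 (congrFun hX i)
    · funext i
      rw [frac_eq z i, frac_eq w i, congrFun hX i]


/-! ## analysis: cube-to-ball map -/

noncomputable def l2 (v : Fin k → ℝ) : ℝ := Real.sqrt (∑ i, v i ^ 2)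

lemma sum_sq_nonneg (v : Fin k → ℝ) : 0 ≤ ∑ i, v i ^ 2 :=
  Finset.sum_nonneg fun i _ => sq_nonneg _

lemma l2_nonneg (v : Fin k → ℝ) : 0 ≤ l2 v := Real.sqrt_nonneg _

lemma l2_sq (v : Fin k → ℝ) : l2 v ^ 2 = ∑ i, v i ^ 2 := Real.sq_sqrt (sum_sq_nonneg v)

lemma l2_eq_zero {v : Fin k → ℝ} : l2 v = 0 ↔ v = 0 := by
  unfold l2
  rw [show (Real.sqrt (∑ i, v i ^ 2) = 0) ↔ (∑ i, v i ^ 2 = 0) from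
    by rw [Real.sqrt_eq_zero (sum_sq_nonneg v)]]
  constructor
  · intro h; funext i
    have := (Finset.sum_eq_zero_iff_of_nonneg (fun i _ => sq_nonneg (v i))).1 h i
      (Finset.mem_univ i)
    exact pow_eq_zero_iff (two_ne_zero) |>.1 this
  · intro h; rw [h]; simp

lemma l2_pos {v : Fin k → ℝ} (hv : v ≠ 0) : 0 < l2 v :=
  lt_of_le_of_ne (l2_nonneg v) (fun h => hv (l2_eq_zero.1 h.symm))

lemma l2_smul (c : ℝ) (hc : 0 ≤ c) (v : Fin k → ℝ) : l2 (c • v) = c * l2 v := by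
  unfold l2
  rw [show ∑ i, (c • v) i ^ 2 = c ^ 2 * ∑ i, v i ^ 2 from by
    rw [Finset.mul_sum]; apply Finset.sum_congr rfl; intro i _; simp [mul_pow]]
  rw [Real.sqrt_mul (sq_nonneg c), Real.sqrt_sq hc]

lemma norm_le_l2 (v : Fin k → ℝ) : ‖v‖ ≤ l2 v := by
  rw [pi_norm_le_iff_of_nonneg (l2_nonneg v)]
  intro i
  rw [Real.norm_eq_abs, ← Real.sqrt_sq_eq_abs]
  exact Real.sqrt_le_sqrt (Finset.single_le_sum (fun j _ => sq_nonneg (v j)) (Finset.mem_univ i))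

noncomputable def yMap (v : Fin k → ℝ) : Fin k → ℝ := (‖v‖ / l2 v) • v
noncomputable def invMap (w : Fin k → ℝ) : Fin k → ℝ := (l2 w / ‖w‖) • w

lemma yMap_zero : yMap (0 : Fin k → ℝ) = 0 := by unfold yMap; simp
lemma invMap_zero : invMap (0 : Fin k → ℝ) = 0 := by unfold invMap; simp

lemma l2_yMap (v : Fin k → ℝ) : l2 (yMap v) = ‖v‖ := by
  by_cases hv : v = 0
  · subst hv; rw [yMap_zero]; simp [l2]
  · unfold yMap
    rw [l2_smul _ (div_nonneg (norm_nonneg v) (l2_nonneg v)) v, div_mul_eq_mul_div,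
      mul_div_assoc, div_self (ne_of_gt (l2_pos hv)), mul_one]

lemma norm_yMap (v : Fin k → ℝ) : ‖yMap v‖ = ‖v‖ ^ 2 / l2 v := by
  by_cases hv : v = 0
  · subst hv; rw [yMap_zero]; simp
  · unfold yMap
    rw [norm_smul, Real.norm_eq_abs, abs_of_nonneg (div_nonneg (norm_nonneg v) (l2_nonneg v))]
    field_simp

lemma invMap_yMap (v : Fin k → ℝ) : invMap (yMap v) = v := by
  by_cases hv : v = 0
  · rw [hv, yMap_zero, invMap_zero]
  · have h1 := l2_pos hv
    have h2 : (0:ℝ) < ‖v‖ := norm_pos_iff.2 hv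
    unfold invMap
    rw [l2_yMap, norm_yMap]
    unfold yMap
    rw [smul_smul]
    rw [show ‖v‖ / (‖v‖ ^ 2 / l2 v) * (‖v‖ / l2 v) = 1 from by field_simp]
    rw [one_smul]

lemma yMap_invMap (w : Fin k → ℝ) : yMap (invMap w) = w := by
  by_cases hw : w = 0
  · rw [hw, invMap_zero, yMap_zero]
  · have h1 := l2_pos hw
    have h2 : (0:ℝ) < ‖w‖ := norm_pos_iff.2 hw
    have hc : (0:ℝ) ≤ l2 w / ‖w‖ := div_nonneg h1.le h2.le
    unfold yMap invMap
    rw [norm_smul, l2_smul _ hc, Real.norm_eq_abs, abs_of_nonneg hc, smul_smul]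
    rw [show l2 w / ‖w‖ * ‖w‖ / (l2 w / ‖w‖ * l2 w) * (l2 w / ‖w‖) = 1 from by
      field_simp]
    rw [one_smul]

lemma norm_invMap (w : Fin k → ℝ) : ‖invMap w‖ = l2 w := by
  by_cases hw : w = 0
  · rw [hw, invMap_zero]; simp [l2]
  · have h1 := l2_pos hw
    have h2 : (0:ℝ) < ‖w‖ := norm_pos_iff.2 hw
    have hc : (0:ℝ) ≤ l2 w / ‖w‖ := div_nonneg h1.le h2.le
    unfold invMap
    rw [norm_smul, Real.norm_eq_abs, abs_of_nonneg hc]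
    field_simp

lemma continuous_l2 : Continuous (l2 (k := k)) :=
  Real.continuous_sqrt.comp (continuous_finset_sum _ fun i _ => (continuous_apply i).pow 2)

lemma continuous_yMap : Continuous (yMap (k := k)) := by
  rw [continuous_iff_continuousAt]
  intro v
  by_cases hv : v = 0
  · subst hv
    unfold ContinuousAt
    rw [yMap_zero]
    apply squeeze_zero_norm (a := fun w : Fin k → ℝ => ‖w‖)
    · intro w
      rw [norm_yMap]
      by_cases hw : w = 0
      · simp [hw]
      · rw [div_le_iff₀ (l2_pos hw)]
        have := norm_le_l2 w
        nlinarith [norm_nonneg w]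
    · exact tendsto_norm_zero
  · exact ((continuous_norm.continuousAt.div continuous_l2.continuousAt
      (ne_of_gt (l2_pos hv))).smul continuousAt_id)


/-! ## the map to the sphere -/

noncomputable def lastC (b : Bool) (v : Fin k → ℝ) : ℝ :=
  (if b then (-1 : ℝ) else 1) * Real.sqrt (1 - ‖v‖ ^ 2)

noncomputable def PhiF (b : Bool) (x : Fin k → ℝ) : Fin (k + 1) → ℝ :=
  fun j => if h : (j : ℕ) < k then yMap (x - 1) ⟨j, h⟩ else lastC b (x - 1)

noncomputable def Phi (z : Σ lam : Mor k, ↥(cube k ((S k).d lam))) :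
    EuclideanSpace ℝ (Fin (k + 1)) :=
  (WithLp.equiv 2 (Fin (k + 1) → ℝ)).symm (PhiF z.1.b (Xz z))

lemma Phi_apply (z : Σ lam : Mor k, ↥(cube k ((S k).d lam))) (j : Fin (k + 1)) :
    Phi z j = PhiF z.1.b (Xz z) j := rfl

lemma Phi_castSucc (z : Σ lam : Mor k, ↥(cube k ((S k).d lam))) (i : Fin k) :
    Phi z (Fin.castSucc i) = yMap (Xz z - 1) i := by
  rw [Phi_apply]; unfold PhiF
  rw [dif_pos (show ((Fin.castSucc i : Fin (k+1)) : ℕ) < k from i.isLt)]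
  rfl

lemma Phi_last (z : Σ lam : Mor k, ↥(cube k ((S k).d lam))) :
    Phi z (Fin.last k) = lastC z.1.b (Xz z - 1) := by
  rw [Phi_apply]; unfold PhiF
  rw [dif_neg (show ¬ ((Fin.last k : Fin (k+1)) : ℕ) < k from lt_irrefl k)]

lemma normV_le_one (z : Σ lam : Mor k, ↥(cube k ((S k).d lam))) : ‖Xz z - 1‖ ≤ 1 := by
  rw [pi_norm_le_iff_of_nonneg zero_le_one]
  intro i
  have h0 := Xz_nonneg z i; have h2 := Xz_le_two z i
  rw [Pi.sub_apply, Pi.one_apply, Real.norm_eq_abs, abs_le]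
  constructor <;> linarith

lemma Phi_norm (z : Σ lam : Mor k, ↥(cube k ((S k).d lam))) : ‖Phi z‖ = 1 := by
  have hA : (0:ℝ) ≤ 1 - ‖Xz z - 1‖ ^ 2 := by
    nlinarith [normV_le_one z, norm_nonneg (Xz z - 1)]
  rw [EuclideanSpace.norm_eq]
  rw [show ∑ j : Fin (k+1), ‖Phi z j‖ ^ 2 = 1 from ?_]
  · exact Real.sqrt_one
  rw [Fin.sum_univ_castSucc]
  have e1 : ∑ i : Fin k, ‖Phi z (Fin.castSucc i)‖ ^ 2 = ‖Xz z - 1‖ ^ 2 := by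
    rw [show ∑ i : Fin k, ‖Phi z (Fin.castSucc i)‖ ^ 2 = ∑ i, yMap (Xz z - 1) i ^ 2 from
      Finset.sum_congr rfl fun i _ => by rw [Phi_castSucc, Real.norm_eq_abs, sq_abs]]
    rw [← l2_sq, l2_yMap]
  have e2 : ‖Phi z (Fin.last k)‖ ^ 2 = 1 - ‖Xz z - 1‖ ^ 2 := by
    rw [Phi_last, Real.norm_eq_abs, sq_abs]
    unfold lastC
    rw [mul_pow, Real.sq_sqrt hA]
    rw [show (if z.1.b then (-1:ℝ) else 1) ^ 2 = 1 from by split_ifs <;> norm_num, one_mul]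
  rw [e1, e2]; ring

/-! ## tag characterisation -/

lemma int_iff_gen {x : Fin k → ℝ} (h0 : ∀ i, 0 ≤ x i) (h2 : ∀ i, x i ≤ 2) :
    Int (fun i => c1 (x i)) (fun i => c2 (x i)) ↔ ∀ i, 0 < x i ∧ x i < 2 := by
  constructor
  · intro h i
    have h3 := h i
    have ha := h0 i; have hb := h2 i
    simp only [c1, c2] at h3
    split_ifs at h3 <;> constructor <;>
      first | linarith | exact absurd (h3 rfl) (by norm_num)
  · intro h i hi
    obtain ⟨ha, hb⟩ := h i
    simp only [c1, c2] at hi ⊢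
    split_ifs at hi ⊢ <;> first | rfl | omega | (exfalso; linarith)

lemma norm_lt_iff (z : Σ lam : Mor k, ↥(cube k ((S k).d lam))) :
    ‖Xz z - 1‖ < 1 ↔ ∀ i, 0 < Xz z i ∧ Xz z i < 2 := by
  rw [pi_norm_lt_iff zero_lt_one]
  constructor
  · intro h i
    have := h i
    rw [Pi.sub_apply, Pi.one_apply, Real.norm_eq_abs, abs_lt] at this
    constructor <;> linarith [this.1, this.2]
  · intro h i
    obtain ⟨ha, hb⟩ := h i
    rw [Pi.sub_apply, Pi.one_apply, Real.norm_eq_abs, abs_lt]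
    constructor <;> linarith

lemma phi_tag_eq {z w : Σ lam : Mor k, ↥(cube k ((S k).d lam))} (hX : Xz z = Xz w)
    (hlast : lastC z.1.b (Xz z - 1) = lastC w.1.b (Xz w - 1)) :
    nTag (fun i => c1 (Xz z i)) (fun i => c2 (Xz z i)) z.1.b
      = nTag (fun i => c1 (Xz w i)) (fun i => c2 (Xz w i)) w.1.b := by
  by_cases hn : ‖Xz z - 1‖ < 1
  · have hpos : 0 < Real.sqrt (1 - ‖Xz z - 1‖ ^ 2) :=
      Real.sqrt_pos.mpr (by nlinarith [norm_nonneg (Xz z - 1)])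
    have hb : z.1.b = w.1.b := by
      rw [← hX] at hlast
      unfold lastC at hlast
      cases hb1 : z.1.b <;> cases hb2 : w.1.b <;> rw [hb1, hb2] at hlast <;>
        first | rfl | (exfalso; simp at hlast; linarith)
    rw [hX, hb]
  · have hI : ¬ Int (fun i => c1 (Xz z i)) (fun i => c2 (Xz z i)) := by
      rw [int_iff_gen (Xz_nonneg z) (Xz_le_two z), ← norm_lt_iff]; exact hn
    have hI' : ¬ Int (fun i => c1 (Xz w i)) (fun i => c2 (Xz w i)) := by
      rw [int_iff_gen (Xz_nonneg w) (Xz_le_two w), ← norm_lt_iff, ← hX]; exact hn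
    unfold nTag; rw [if_neg hI, if_neg hI']

lemma last_of_tag {z w : Σ lam : Mor k, ↥(cube k ((S k).d lam))} (hX : Xz z = Xz w)
    (ht : nTag (fun i => c1 (Xz z i)) (fun i => c2 (Xz z i)) z.1.b
      = nTag (fun i => c1 (Xz w i)) (fun i => c2 (Xz w i)) w.1.b) :
    lastC z.1.b (Xz z - 1) = lastC w.1.b (Xz w - 1) := by
  rw [← hX]
  by_cases hn : ‖Xz z - 1‖ < 1
  · have hI : Int (fun i => c1 (Xz z i)) (fun i => c2 (Xz z i)) :=
      (int_iff_gen (Xz_nonneg z) (Xz_le_two z)).2 ((norm_lt_iff z).1 hn)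
    rw [← hX] at ht
    have hI' := hI
    rw [nTag_eq_self (fun _ => hI), nTag_eq_self (fun _ => hI')] at ht
    rw [ht]
  · have h0 : Real.sqrt (1 - ‖Xz z - 1‖ ^ 2) = 0 := by
      rw [Real.sqrt_eq_zero']
      nlinarith [not_lt.1 hn]
    unfold lastC
    rw [h0, mul_zero, mul_zero]

lemma phi_eq_iff {z w : Σ lam : Mor k, ↥(cube k ((S k).d lam))} :
    Phi z = Phi w ↔ realRel (S k) z w := by
  rw [realRel_iff]
  constructor
  · intro h
    have happ : ∀ j, Phi z j = Phi w j := fun j =>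
      congrArg (fun u : EuclideanSpace ℝ (Fin (k + 1)) => u j) h
    have hy : yMap (Xz z - 1) = yMap (Xz w - 1) := by
      funext i
      have := happ (Fin.castSucc i)
      rwa [Phi_castSucc, Phi_castSucc] at this
    have hXX : Xz z = Xz w := by
      have h2 := congrArg invMap hy
      rw [invMap_yMap, invMap_yMap] at h2
      calc Xz z = (Xz z - 1) + 1 := by rw [sub_add_cancel]
        _ = (Xz w - 1) + 1 := by rw [h2]
        _ = Xz w := by rw [sub_add_cancel]
    have hlast : lastC z.1.b (Xz z - 1) = lastC w.1.b (Xz w - 1) := by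
      have := happ (Fin.last k)
      rwa [Phi_last, Phi_last] at this
    exact ⟨hXX, phi_tag_eq hXX hlast⟩
  · rintro ⟨hX, ht⟩
    unfold Phi
    apply congrArg
    funext j
    unfold PhiF
    by_cases hj : (j : ℕ) < k
    · rw [dif_pos hj, dif_pos hj, hX]
    · rw [dif_neg hj, dif_neg hj]
      exact last_of_tag hX ht


/-! ## surjectivity -/

lemma xrecon {v : ℝ} (h0 : 0 ≤ v) (h2 : v ≤ 2) :
    (if c2 v ≤ 1 then (c1 v : ℝ) + fr v else (c2 v : ℝ) - fr v) = v := by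
  simp only [c1, c2, fr]
  split_ifs <;> push_cast <;> first | linarith | omega

lemma fr_range {v : ℝ} (h0 : 0 ≤ v) (h2 : v ≤ 2) :
    0 ≤ fr v ∧ fr v ≤ ((c2 v - c1 v : ℕ) : ℝ) := by
  simp only [c1, c2, fr]
  split_ifs <;> constructor <;> push_cast <;> first | linarith | omega

lemma phi_surj (y : EuclideanSpace ℝ (Fin (k + 1))) (hy : ‖y‖ = 1) :
    ∃ z : Σ lam : Mor k, ↥(cube k ((S k).d lam)), Phi z = y := by
  set w : Fin k → ℝ := fun i => y (Fin.castSucc i) with hw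
  set ζ : ℝ := y (Fin.last k) with hz0
  have hsum : ∑ j : Fin (k + 1), (y j) ^ 2 = 1 := by
    rw [EuclideanSpace.norm_eq] at hy
    have := Real.sqrt_eq_one.1 hy
    simpa only [Real.norm_eq_abs, sq_abs] using this
  have hl2w : (l2 w) ^ 2 = 1 - ζ ^ 2 := by
    rw [l2_sq]
    rw [Fin.sum_univ_castSucc] at hsum
    simp only [hw]
    linarith
  have hl2w1 : l2 w ≤ 1 := by nlinarith [l2_nonneg w, sq_nonneg ζ]
  set v := invMap w with hv
  have hnv : ‖v‖ = l2 w := norm_invMap w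
  have hvb : ∀ i, |v i| ≤ 1 := by
    intro i
    calc |v i| = ‖v i‖ := (Real.norm_eq_abs _).symm
      _ ≤ ‖v‖ := norm_le_pi_norm v i
      _ ≤ 1 := by rw [hnv]; exact hl2w1
  set x : Fin k → ℝ := fun i => v i + 1 with hx
  have hx0 : ∀ i, 0 ≤ x i := by
    intro i; have := hvb i; rw [abs_le] at this
    simp only [hx]; linarith [this.1]
  have hx2 : ∀ i, x i ≤ 2 := by
    intro i; have := hvb i; rw [abs_le] at this
    simp only [hx]; linarith [this.2]
  set b0 : Bool := if ζ < 0 then true else false with hb0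
  set lamS : Mor k := mk' (fun i => c1 (x i)) (fun i => c2 (x i)) b0
    (fun i => c1_le_c2 (hx0 i)) with hlamS
  set tS : Fin k → ℝ := fun i => fr (x i) with htS
  have hmem : tS ∈ cube k ((S k).d lamS) := by
    simp only [cube]
    rw [Set.mem_Icc]
    constructor
    · intro i; exact (fr_range (hx0 i) (hx2 i)).1
    · intro i
      show tS i ≤ (((c2 (x i) - c1 (x i) : ℕ)) : ℝ)
      exact (fr_range (hx0 i) (hx2 i)).2
  set z : Σ lam : Mor k, ↥(cube k ((S k).d lam)) := ⟨lamS, ⟨tS, hmem⟩⟩ with hzz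
  have hXz : Xz z = x := by
    funext i
    show (if lamS.q i ≤ 1 then (lamS.p i : ℝ) + tS i else (lamS.q i : ℝ) - tS i) = x i
    simp only [hlamS, mk'_p, mk'_q]
    exact xrecon (hx0 i) (hx2 i)
  have hVz : Xz z - 1 = v := by
    funext i
    rw [Pi.sub_apply, Pi.one_apply, hXz]
    simp [hx]
  have hnormv : ‖v‖ ≤ 1 := by rw [hnv]; exact hl2w1
  refine ⟨z, ?_⟩
  unfold Phi
  rw [Equiv.symm_apply_eq]
  funext j
  show PhiF z.1.b (Xz z) j = y j
  unfold PhiF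
  by_cases hj : (j : ℕ) < k
  · rw [dif_pos hj, hVz, hv, yMap_invMap]
    show y (Fin.castSucc ⟨(j : ℕ), hj⟩) = y j
    rfl
  · rw [dif_neg hj, hVz]
    have hjl : j = Fin.last k := Fin.ext (by have := j.isLt; simp only [Fin.val_last]; omega)
    subst hjl
    show lastC lamS.b v = ζ
    unfold lastC
    rw [hnv, show (1 : ℝ) - l2 w ^ 2 = ζ ^ 2 from by rw [hl2w]; ring, Real.sqrt_sq_eq_abs]
    by_cases hI : Int (fun i => c1 (x i)) (fun i => c2 (x i))
    · have hbS : lamS.b = b0 := nTag_eq_self (fun _ => hI)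
      rw [hbS, hb0]
      by_cases hzneg : ζ < 0
      · rw [if_pos hzneg]
        rw [if_pos rfl, abs_of_neg hzneg]
        ring
      · rw [if_neg hzneg]
        rw [if_neg (by simp), abs_of_nonneg (not_lt.1 hzneg)]
        ring
    · have hvn1 : (1 : ℝ) ≤ ‖v‖ := by
        rw [int_iff_gen hx0 hx2] at hI
        push_neg at hI
        obtain ⟨i, hi⟩ := hI
        have hvi : v i = x i - 1 := by simp [hx]
        have habs : (1 : ℝ) ≤ |v i| := by
          rcases le_or_gt (x i) 0 with hc | hc
          · apply le_abs.2 (Or.inr (by linarith))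
          · have := hi hc
            apply le_abs.2 (Or.inl (by linarith))
        calc (1:ℝ) ≤ |v i| := habs
          _ = ‖v i‖ := (Real.norm_eq_abs _).symm
          _ ≤ ‖v‖ := norm_le_pi_norm v i
      have hl2one : l2 w = 1 := le_antisymm hl2w1 (by rw [← hnv]; exact hvn1)
      have hζsq : ζ ^ 2 = 0 := by nlinarith
      have hζ : ζ = 0 := pow_eq_zero_iff two_ne_zero |>.1 hζsq
      have hbS : lamS.b = false := by
        show nTag _ _ b0 = false
        unfold nTag; rw [if_neg hI]
      rw [hbS, hζ]
      simp


/-! ## continuity and the homeomorphism -/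

lemma continuous_Phi : Continuous (Phi (k := k)) := by
  apply continuous_sigma
  intro lam
  have hX : Continuous (fun t : ↥(cube k ((S k).d lam)) => Xz ⟨lam, t⟩) := by
    apply continuous_pi
    intro i
    unfold Xz
    by_cases h : lam.q i ≤ 1
    · simp only [h, if_true]
      exact continuous_const.add ((continuous_apply i).comp continuous_subtype_val)
    · simp only [h, if_false]
      exact continuous_const.sub ((continuous_apply i).comp continuous_subtype_val)
  unfold Phi
  apply Continuous.comp
  · exact PiLp.continuous_toLp 2 (fun _ : Fin (k + 1) => ℝ)
  · apply continuous_pi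
    intro j
    unfold PhiF
    by_cases hj : (j : ℕ) < k
    · simp only [dif_pos hj]
      exact (continuous_apply _).comp (continuous_yMap.comp (hX.sub continuous_const))
    · simp only [dif_neg hj]
      unfold lastC
      apply Continuous.mul continuous_const
      apply Real.continuous_sqrt.comp
      exact continuous_const.sub ((continuous_norm.comp (hX.sub continuous_const)).pow 2)

instance cubeCompact (lam : Mor k) : CompactSpace ↥(cube k ((S k).d lam)) :=
  isCompact_iff_compactSpace.mp (by simp only [cube]; exact isCompact_Icc)

instance realCompact : CompactSpace (Realisation (S k)) := by
  show CompactSpace (Quotient (realSetoid (S k)))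
  infer_instance

noncomputable def PhiS (z : Σ lam : Mor k, ↥(cube k ((S k).d lam))) :
    ↥(Metric.sphere (0 : EuclideanSpace ℝ (Fin (k + 1))) 1) :=
  ⟨Phi z, by rw [mem_sphere_zero_iff_norm]; exact Phi_norm z⟩

theorem main (k : ℕ) :
    Nonempty (Realisation (S k) ≃ₜ Metric.sphere (0 : EuclideanSpace ℝ (Fin (k + 1))) 1) := by
  letI sd := realSetoid (S k)
  have hresp : ∀ a b : Σ lam : Mor k, ↥(cube k ((S k).d lam)),
      a ≈ b → PhiS a = PhiS b := fun a b h => Subtype.ext (phi_eq_iff.2 h)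
  let F : Realisation (S k) → ↥(Metric.sphere (0 : EuclideanSpace ℝ (Fin (k + 1))) 1) :=
    Quotient.lift PhiS hresp
  have hbij : Function.Bijective F := by
    constructor
    · intro a b
      refine Quotient.inductionOn₂ a b ?_
      intro x y h
      exact Quotient.sound (phi_eq_iff.1 (congrArg Subtype.val h))
    · rintro ⟨y, hy⟩
      obtain ⟨z, hz⟩ := phi_surj y (mem_sphere_zero_iff_norm.1 hy)
      exact ⟨Quotient.mk sd z, Subtype.ext hz⟩
  have hcont : Continuous F := Continuous.quotient_lift (continuous_Phi.subtype_mk _) hresp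
  let e : Realisation (S k) ≃ ↥(Metric.sphere (0 : EuclideanSpace ℝ (Fin (k + 1))) 1) :=
    Equiv.ofBijective F hbij
  exact ⟨Continuous.homeoOfEquivCompactToT2 (f := e) hcont⟩

end SphereGraph

/-- for each `k ≥ 1` there is a finite `k`-graph whose topological realisation
is homeomorphic to the `k`-sphere. -/
theorem sphere_realised (k : ℕ) (hk : 1 ≤ k) :
    ∃ (M : Type) (S : KGraphOn k M), Finite M ∧
      Nonempty (Realisation S ≃ₜ Metric.sphere (0 : EuclideanSpace ℝ (Fin (k + 1))) 1) :=
  ⟨SphereGraph.Mor k, SphereGraph.S k, inferInstance, SphereGraph.main k⟩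
end
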